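/- arXiv:1908.02234 — 4 statements merged into one kernel-verified Lean document; each statement's English description precedes it below -/
import Mathlib

section
/- Let n ≥ 1 and let p_0, p_1, …, p_n be polynomials with complex coefficients such that p_j has degree exactly j for each j (in particular p_0 is a nonzero constant c and p_1(z) = a·z + b with a ≠ 0). Define K_n(z,w) = Σ_{j=0}^n p_j(z)·conj(p_j(w)). Then for all complex z ≠ w, K_n(z,z)·K_n(w,w) − |K_n(z,w)|² ≥ |c·a|²·|z − w|² > 0. -/
open Finset Polynomial

private lemma lagrange2 (u₀ u₁ v₀ v₁ : ℂ) :
    ‖u₀ * v₁ - u₁ * v₀‖ ^ 2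
      = (‖u₀‖ ^ 2 + ‖u₁‖ ^ 2) * (‖v₀‖ ^ 2 + ‖v₁‖ ^ 2)
        - ‖u₀ * (starRingEnd ℂ) v₀ + u₁ * (starRingEnd ℂ) v₁‖ ^ 2 := by
  simp only [Complex.sq_norm, Complex.normSq_apply,
    Complex.mul_re, Complex.mul_im, Complex.sub_re, Complex.sub_im,
    Complex.add_re, Complex.add_im, Complex.conj_re, Complex.conj_im]
  ring

private lemma cs (s : Finset ℕ) (f g : ℕ → ℂ) :
    ‖∑ j ∈ s, f j * (starRingEnd ℂ) (g j)‖ ^ 2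
      ≤ (∑ j ∈ s, ‖f j‖ ^ 2) * (∑ j ∈ s, ‖g j‖ ^ 2) := by
  calc ‖∑ j ∈ s, f j * (starRingEnd ℂ) (g j)‖ ^ 2
      ≤ (∑ j ∈ s, ‖f j‖ * ‖g j‖) ^ 2 := by
        apply pow_le_pow_left₀ (norm_nonneg _)
        refine (norm_sum_le _ _).trans (le_of_eq ?_)
        refine Finset.sum_congr rfl fun j _ => ?_
        rw [norm_mul, RCLike.norm_conj]
    _ ≤ (∑ j ∈ s, ‖f j‖ ^ 2) * (∑ j ∈ s, ‖g j‖ ^ 2) :=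
        Finset.sum_mul_sq_le_sq_mul_sq s _ _

private lemma key (f g : ℕ → ℂ) (n : ℕ) (hn : 1 ≤ n) :
    ‖f 0 * g 1 - f 1 * g 0‖ ^ 2
      ≤ (∑ j ∈ Finset.range (n + 1), ‖f j‖ ^ 2) * (∑ j ∈ Finset.range (n + 1), ‖g j‖ ^ 2)
        - ‖∑ j ∈ Finset.range (n + 1), f j * (starRingEnd ℂ) (g j)‖ ^ 2 := by
  have hsplit : ∀ F : ℕ → ℂ, ∑ j ∈ Finset.range (n + 1), F j
      = (F 0 + F 1) + ∑ j ∈ Finset.Ico 2 (n + 1), F j := by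
    intro F
    rw [Finset.range_eq_Ico, ← Finset.sum_Ico_consecutive _ (by omega : 0 ≤ 2) (by omega : 2 ≤ n + 1)]
    congr 1
    rw [← Finset.range_eq_Ico, Finset.sum_range_succ, Finset.sum_range_one]
  have hsplitR : ∀ F : ℕ → ℝ, ∑ j ∈ Finset.range (n + 1), F j
      = (F 0 + F 1) + ∑ j ∈ Finset.Ico 2 (n + 1), F j := by
    intro F
    rw [Finset.range_eq_Ico, ← Finset.sum_Ico_consecutive _ (by omega : 0 ≤ 2) (by omega : 2 ≤ n + 1)]
    congr 1
    rw [← Finset.range_eq_Ico, Finset.sum_range_succ, Finset.sum_range_one]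
  rw [hsplitR (fun j => ‖f j‖ ^ 2), hsplitR (fun j => ‖g j‖ ^ 2),
    hsplit (fun j => f j * (starRingEnd ℂ) (g j)), lagrange2]
  set A₁ : ℝ := ‖f 0‖ ^ 2 + ‖f 1‖ ^ 2 with hA₁
  set B₁ : ℝ := ‖g 0‖ ^ 2 + ‖g 1‖ ^ 2 with hB₁
  set A₂ : ℝ := ∑ j ∈ Finset.Ico 2 (n + 1), ‖f j‖ ^ 2 with hA₂
  set B₂ : ℝ := ∑ j ∈ Finset.Ico 2 (n + 1), ‖g j‖ ^ 2 with hB₂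
  set C₁ : ℂ := f 0 * (starRingEnd ℂ) (g 0) + f 1 * (starRingEnd ℂ) (g 1) with hC₁
  set C₂ : ℂ := ∑ j ∈ Finset.Ico 2 (n + 1), f j * (starRingEnd ℂ) (g j) with hC₂
  have hA₂0 : 0 ≤ A₂ := Finset.sum_nonneg fun j _ => sq_nonneg _
  have hB₂0 : 0 ≤ B₂ := Finset.sum_nonneg fun j _ => sq_nonneg _
  have hA₁0 : 0 ≤ A₁ := by positivity
  have hB₁0 : 0 ≤ B₁ := by positivity
  have h1 : ‖C₁‖ ^ 2 ≤ A₁ * B₁ := by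
    have := cs {0, 1} f g
    simpa [Finset.sum_pair (by norm_num : (0:ℕ) ≠ 1)] using this
  have h2 : ‖C₂‖ ^ 2 ≤ A₂ * B₂ := cs _ f g
  have htri : ‖C₁ + C₂‖ ≤ ‖C₁‖ + ‖C₂‖ := norm_add_le _ _
  have htri2 : ‖C₁ + C₂‖ ^ 2 ≤ (‖C₁‖ + ‖C₂‖) ^ 2 := by
    apply pow_le_pow_left₀ (norm_nonneg _) htri
  have hc10 : (0:ℝ) ≤ ‖C₁‖ := norm_nonneg _
  have hc20 : (0:ℝ) ≤ ‖C₂‖ := norm_nonneg _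
  have h3 : 2 * (‖C₁‖ * ‖C₂‖) ≤ A₁ * B₂ + A₂ * B₁ := by
    nlinarith [sq_nonneg (A₁ * B₂ - A₂ * B₁),
      mul_le_mul h1 h2 (sq_nonneg _) (mul_nonneg hA₁0 hB₁0),
      mul_nonneg hc10 hc20,
      add_nonneg (mul_nonneg hA₁0 hB₂0) (mul_nonneg hA₂0 hB₁0)]
  nlinarith [htri2, h2, h3, mul_nonneg hA₁0 hB₂0, mul_nonneg hA₂0 hB₁0, sq_nonneg ‖C₁‖]

/-- for a polynomial basis `p_0,…,p_n` with `deg p_j = j` (so `p_0 = c ≠ 0`,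
`p_1 = a·z + b` with `a ≠ 0`), the reproducing kernel `K_n(z,w) = Σ_j p_j(z)·conj(p_j(w))`
satisfies `K_n(z,z)·K_n(w,w) − |K_n(z,w)|² ≥ |c·a|²·|z−w|² > 0` for `z ≠ w`. -/
theorem kernel_determinant_pos
    (n : ℕ) (hn : 1 ≤ n) (p : ℕ → Polynomial ℂ)
    (hdeg : ∀ j ≤ n, (p j).degree = j)
    (c a : ℂ) (hc : c = (p 0).coeff 0) (ha : a = (p 1).coeff 1)
    (z w : ℂ) (hzw : z ≠ w) :
    ‖c * a‖ ^ 2 * ‖z - w‖ ^ 2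
      ≤ (∑ j ∈ Finset.range (n + 1), ‖(p j).eval z‖ ^ 2) *
          (∑ j ∈ Finset.range (n + 1), ‖(p j).eval w‖ ^ 2) -
        ‖∑ j ∈ Finset.range (n + 1), (p j).eval z * (starRingEnd ℂ) ((p j).eval w)‖ ^ 2
      ∧ 0 < ‖c * a‖ ^ 2 * ‖z - w‖ ^ 2 := by
  have hd0 : (p 0).degree = 0 := by simpa using hdeg 0 (by omega)
  have hd1 : (p 1).degree = 1 := by simpa using hdeg 1 hn
  have hp0 : p 0 = Polynomial.C c := by
    rw [hc]; exact Polynomial.eq_C_of_degree_le_zero (le_of_eq hd0)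
  have hc0 : c ≠ 0 := by
    intro h
    have : p 0 ≠ 0 := fun hz => by simp [hz] at hd0
    rw [hp0, h, map_zero] at this; exact this rfl
  have ha0 : a ≠ 0 := by
    rw [ha]
    have hnd : (p 1).natDegree = 1 := Polynomial.natDegree_eq_of_degree_eq_some hd1
    have hne1 : p 1 ≠ 0 := by
      intro hz
      rw [hz, Polynomial.degree_zero] at hd1
      simp at hd1
    have h := Polynomial.leadingCoeff_ne_zero.mpr hne1
    rwa [Polynomial.leadingCoeff, hnd] at h
  -- evaluate p 0 and p 1
  have he0 : ∀ x : ℂ, (p 0).eval x = c := fun x => by rw [hp0]; simp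
  have hnd1 : (p 1).natDegree = 1 := Polynomial.natDegree_eq_of_degree_eq_some hd1
  have he1 : ∀ x : ℂ, (p 1).eval x = (p 1).coeff 0 + a * x := by
    intro x
    rw [ha]
    conv_lhs => rw [Polynomial.eval_eq_sum_range' (by rw [hnd1]; norm_num : (p 1).natDegree < 2)]
    rw [Finset.sum_range_succ, Finset.sum_range_one]
    ring
  set b : ℂ := (p 1).coeff 0
  have hkey := key (fun j => (p j).eval z) (fun j => (p j).eval w) n hn
  have hterm : (p 0).eval z * (p 1).eval w - (p 1).eval z * (p 0).eval w = c * a * (w - z) := by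
    rw [he0, he0, he1, he1]; ring
  have hkey' : ‖(p 0).eval z * (p 1).eval w - (p 1).eval z * (p 0).eval w‖ ^ 2
      ≤ (∑ j ∈ Finset.range (n + 1), ‖(p j).eval z‖ ^ 2) *
          (∑ j ∈ Finset.range (n + 1), ‖(p j).eval w‖ ^ 2) -
        ‖∑ j ∈ Finset.range (n + 1), (p j).eval z * (starRingEnd ℂ) ((p j).eval w)‖ ^ 2 := hkey
  constructor
  · refine le_trans (le_of_eq ?_) hkey'
    rw [hterm, show w - z = -(z - w) by ring]
    simp only [norm_mul, norm_neg]
    ring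
  · have hca : c * a ≠ 0 := mul_ne_zero hc0 ha0
    have hzw' : z - w ≠ 0 := sub_ne_zero.mpr hzw
    have h1 : 0 < ‖c * a‖ := norm_pos_iff.mpr hca
    have h2 : 0 < ‖z - w‖ := norm_pos_iff.mpr hzw'
    positivity
end

section
/- Let {φ_k} be OPUC for a Borel probability measure μ on the unit circle. For z, w ∈ ℂ with z·conj(w) ≠ 1, Σ_{j=0}^n φ_j(z)·conj(φ_j′(w)) = ( S_n(z,w) + z·K_n(z,w) ) / ( 1 − z·conj(w) ), where K_n(z,w) = Σ_{j=0}^n φ_j(z)·conj(φ_j(w)) and S_n(z,w) = conj( (φ_{n+1}^*)′(w) )·φ_{n+1}^*(z) − conj( φ_{n+1}′(w) )·φ_{n+1}(z). -/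
open MeasureTheory Polynomial Finset

noncomputable section

/-- The reversed polynomial `p*(z) = z^n·conj(p(1/conj z))`. -/
def starPoly (p : Polynomial ℂ) : Polynomial ℂ := (p.map (starRingEnd ℂ)).reverse

namespace CD01

def e (θ : ℝ) : ℂ := Complex.exp (θ * Complex.I)

lemma e_mul_conj (θ : ℝ) : e θ * (starRingEnd ℂ) (e θ) = 1 := by
  rw [Complex.mul_conj]
  norm_cast
  rw [Complex.normSq_eq_norm_sq]
  simp [e, Complex.norm_exp_ofReal_mul_I]

lemma e_ne_zero (θ : ℝ) : e θ ≠ 0 := Complex.exp_ne_zero _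

lemma norm_e (θ : ℝ) : ‖e θ‖ = 1 := by
  simpa [e] using Complex.abs_exp_ofReal_mul_I θ

/-- inner product -/
def inn (μ : Measure ℝ) (p q : Polynomial ℂ) : ℂ :=
  ∫ θ, p.eval (e θ) * (starRingEnd ℂ) (q.eval (e θ)) ∂μ

lemma eval_norm_le (p : Polynomial ℂ) {u : ℂ} (hu : ‖u‖ = 1) :
    ‖p.eval u‖ ≤ ∑ k ∈ range (p.natDegree + 1), ‖p.coeff k‖ := by
  rw [Polynomial.eval_eq_sum_range]
  refine le_trans (norm_sum_le _ _) (le_of_eq ?_)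
  refine Finset.sum_congr rfl fun k _ => ?_
  rw [norm_mul, norm_pow, hu, one_pow, mul_one]

lemma integrable (μ : Measure ℝ) [IsFiniteMeasure μ] (p q : Polynomial ℂ) :
    Integrable (fun θ => p.eval (e θ) * (starRingEnd ℂ) (q.eval (e θ))) μ := by
  refine ⟨(Continuous.aestronglyMeasurable ?_), ?_⟩
  · exact ((p.continuous_aeval.comp (Complex.continuous_exp.comp ((Complex.continuous_ofReal).mul continuous_const) : Continuous e))).mul
      (Complex.continuous_conj.comp (q.continuous_aeval.comp (Complex.continuous_exp.comp ((Complex.continuous_ofReal).mul continuous_const) : Continuous e)))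
  · refine HasFiniteIntegral.of_bounded (C :=
      (∑ k ∈ range (p.natDegree + 1), ‖p.coeff k‖) * ∑ k ∈ range (q.natDegree + 1), ‖q.coeff k‖)
      (Filter.Eventually.of_forall fun θ => ?_)
    rw [norm_mul]
    have h1 := eval_norm_le p (norm_e θ)
    have h2 := eval_norm_le q (norm_e θ)
    have : ‖(starRingEnd ℂ) (q.eval (e θ))‖ = ‖q.eval (e θ)‖ := RCLike.norm_conj _
    rw [this]
    exact mul_le_mul h1 h2 (norm_nonneg _) (Finset.sum_nonneg fun _ _ => norm_nonneg _)

variable {μ : Measure ℝ} [IsFiniteMeasure μ]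

lemma inn_conj (p q : Polynomial ℂ) : inn μ q p = (starRingEnd ℂ) (inn μ p q) := by
  rw [inn, inn, ← integral_conj]
  congr 1; funext θ; simp [mul_comm]

lemma inn_add_left (p q r : Polynomial ℂ) :
    inn μ (p + q) r = inn μ p r + inn μ q r := by
  rw [inn, inn, inn, ← integral_add (integrable μ p r) (integrable μ q r)]
  congr 1; funext θ; simp [add_mul]

lemma inn_smul_left (c : ℂ) (p r : Polynomial ℂ) :
    inn μ (c • p) r = c * inn μ p r := by
  rw [inn, inn, ← integral_const_mul]
  congr 1; funext θ; simp [mul_assoc]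

lemma inn_sum_left {ι : Type*} (s : Finset ι) (f : ι → Polynomial ℂ) (r : Polynomial ℂ) :
    inn μ (∑ i ∈ s, f i) r = ∑ i ∈ s, inn μ (f i) r := by
  induction s using Finset.cons_induction with
  | empty => simp [inn]
  | cons a s ha ih => rw [Finset.sum_cons, Finset.sum_cons, inn_add_left, ih]

lemma star_eval (p : Polynomial ℂ) {u : ℂ} (hu : u * (starRingEnd ℂ) u = 1) :
    (starPoly p).eval u = u ^ p.natDegree * (starRingEnd ℂ) (p.eval u) := by
  have hu0 : u ≠ 0 := by rintro rfl; simp at hu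
  have hinv : u⁻¹ = (starRingEnd ℂ) u := (eq_inv_of_mul_eq_one_left
    (by rw [mul_comm]; exact hu)).symm
  letI : Invertible (u⁻¹ : ℂ) := invertibleOfNonzero (inv_ne_zero hu0)
  have h := Polynomial.eval₂_reverse_mul_pow (RingHom.id ℂ) (u⁻¹)
    (p.map (starRingEnd ℂ))
  rw [invOf_eq_inv, inv_inv] at h
  have hd : (p.map (starRingEnd ℂ)).natDegree = p.natDegree := natDegree_map _
  rw [hd] at h
  have he : ∀ (f : Polynomial ℂ) (x : ℂ), Polynomial.eval₂ (RingHom.id ℂ) x f = f.eval x := by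
    intro f x; rfl
  rw [he, he] at h
  have h2 : (p.map (starRingEnd ℂ)).eval u⁻¹ = (starRingEnd ℂ) (p.eval u) := by
    rw [hinv, Polynomial.eval_map, Polynomial.eval₂_at_apply]
  calc (starPoly p).eval u = ((p.map (starRingEnd ℂ)).reverse.eval u * u⁻¹ ^ p.natDegree)
        * u ^ p.natDegree := by
        rw [mul_assoc, ← mul_pow, inv_mul_cancel₀ hu0, one_pow, mul_one]; rfl
    _ = u ^ p.natDegree * (starRingEnd ℂ) (p.eval u) := by rw [h, h2, mul_comm]



section Rep
variable (φ : ℕ → Polynomial ℂ) (hdeg : ∀ k, (φ k).degree = k)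

include hdeg

lemma phi_natDegree (k : ℕ) : (φ k).natDegree = k :=
  natDegree_eq_of_degree_eq_some (hdeg k)

lemma phi_coeff_ne (k : ℕ) : (φ k).coeff k ≠ 0 := by
  have h := phi_natDegree φ hdeg k
  have h2 : (φ k).coeff k = (φ k).leadingCoeff := by
    rw [← Polynomial.coeff_natDegree, h]
  rw [h2, Polynomial.leadingCoeff_ne_zero]
  intro h0
  have := hdeg k
  rw [h0] at this
  simp at this

lemma exists_rep : ∀ (m : ℕ) (p : Polynomial ℂ), p.degree < ((m+1 : ℕ) : WithBot ℕ) →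
    ∃ c : ℕ → ℂ, p = ∑ j ∈ range (m+1), c j • φ j := by
  intro m
  induction m with
  | zero =>
    intro p hp
    refine ⟨fun _ => p.coeff 0 / (φ 0).coeff 0, ?_⟩
    rw [Finset.sum_range_one]
    ext k
    rcases Nat.eq_zero_or_pos k with rfl | hk
    · simp [div_mul_cancel₀ _ (phi_coeff_ne φ hdeg 0)]
    · have h1 : p.coeff k = 0 := (degree_lt_iff_coeff_zero p 1).mp hp k hk
      have h2 : (φ 0).coeff k = 0 := by
        apply coeff_eq_zero_of_degree_lt
        rw [hdeg 0]
        exact_mod_cast hk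
      simp [h1, h2]
  | succ m ih =>
    intro p hp
    set c' := p.coeff (m+1) / (φ (m+1)).coeff (m+1) with hc'
    set q := p - c' • φ (m+1) with hqdef
    have hq : q.degree < ((m+1 : ℕ) : WithBot ℕ) := by
      rw [degree_lt_iff_coeff_zero]
      intro k hk
      rcases eq_or_lt_of_le hk with rfl | hk2
      · simp [hqdef, hc', div_mul_cancel₀ _ (phi_coeff_ne φ hdeg (m+1))]
      · have h1 : p.coeff k = 0 := (degree_lt_iff_coeff_zero p (m+2)).mp hp k hk2
        have h2 : (φ (m+1)).coeff k = 0 := by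
          apply coeff_eq_zero_of_degree_lt
          rw [hdeg (m+1)]
          exact_mod_cast hk2
        simp [hqdef, h1, h2]
    obtain ⟨c, hc⟩ := ih q hq
    refine ⟨fun j => if j = m+1 then c' else c j, ?_⟩
    rw [Finset.sum_range_succ]
    simp only [reduceIte]
    have hmem : ∑ j ∈ range (m+1), (if j = m+1 then c' else c j) • φ j
        = ∑ j ∈ range (m+1), c j • φ j := by
      refine Finset.sum_congr rfl fun j hj => ?_
      rw [if_neg (by simp only [Finset.mem_range] at hj; omega)]
    rw [hmem, ← hc, hqdef]
    ring
end Rep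
def bf (φ : ℕ → Polynomial ℂ) (n : ℕ) : ℕ → Polynomial ℂ
  | 0 => starPoly (φ (n+1))
  | (k+1) => X * φ k

section Main
variable {μ : Measure ℝ} [IsFiniteMeasure μ] (φ : ℕ → Polynomial ℂ)
  (hdeg : ∀ k, (φ k).degree = k)
  (horth : ∀ a b, (∫ θ, (φ a).eval (Complex.exp (θ * Complex.I)) *
        (starRingEnd ℂ) ((φ b).eval (Complex.exp (θ * Complex.I))) ∂μ)
        = if a = b then 1 else 0)

lemma phi_ne_zero (hdeg : ∀ k, (φ k).degree = k) (k : ℕ) : φ k ≠ 0 := by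
  intro h0
  have := hdeg k
  rw [h0, degree_zero] at this
  exact (by simp : (⊥ : WithBot ℕ) ≠ (k : WithBot ℕ)) this

include horth in
lemma inn_phi_phi (a b : ℕ) : inn μ (φ a) (φ b) = if a = b then 1 else 0 := horth a b

include hdeg horth in
lemma inn_low (m : ℕ) (p : Polynomial ℂ) (hp : p.degree < ((m+1:ℕ) : WithBot ℕ)) :
    inn μ p (φ (m+1)) = 0 := by
  obtain ⟨c, hc⟩ := exists_rep φ hdeg m p hp
  rw [hc, inn_sum_left]
  refine Finset.sum_eq_zero fun j hj => ?_
  rw [inn_smul_left, inn_phi_phi φ horth,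
    if_neg (by simp only [Finset.mem_range] at hj; omega), mul_zero]

include hdeg in
lemma star_natDegree_le (m : ℕ) : (starPoly (φ m)).natDegree ≤ m := by
  refine le_trans (reverse_natDegree_le _) ?_
  rw [natDegree_map, phi_natDegree φ hdeg]

include hdeg in
lemma star_eval_phi (m : ℕ) (θ : ℝ) :
    (starPoly (φ m)).eval (e θ) = (e θ) ^ m * (starRingEnd ℂ) ((φ m).eval (e θ)) := by
  rw [star_eval _ (e_mul_conj θ), phi_natDegree φ hdeg]

include hdeg in
lemma deg_aux (n k : ℕ) (hk : k ≤ n) :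
    (X ^ (n-k) * starPoly (φ k)).degree < ((n+1:ℕ) : WithBot ℕ) := by
  rw [degree_lt_iff_coeff_zero]
  intro j hj
  apply coeff_eq_zero_of_natDegree_lt
  have h1 := natDegree_mul_le (p := (X:Polynomial ℂ) ^ (n-k)) (q := starPoly (φ k))
  have h2 := star_natDegree_le φ hdeg k
  rw [natDegree_X_pow] at h1
  omega

include hdeg horth in
lemma inn_bb (n : ℕ) : ∀ k l, k < n+2 → l < n+2 →
    inn μ (bf φ n k) (bf φ n l) = if k = l then 1 else 0 := by
  have e1 := e_mul_conj
  have hs : ∀ θ, (starPoly (φ (n+1))).eval (e θ)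
      = (e θ) ^ (n+1) * (starRingEnd ℂ) ((φ (n+1)).eval (e θ)) := star_eval_phi φ hdeg (n+1)
  -- case (k+1, 0)
  have hc10 : ∀ k, k ≤ n → inn μ (bf φ n (k+1)) (bf φ n 0) = 0 := by
    intro k hk
    have key : ∀ θ : ℝ, (X * φ k).eval (e θ) * (starRingEnd ℂ) ((starPoly (φ (n+1))).eval (e θ))
        = (φ (n+1)).eval (e θ) * (starRingEnd ℂ) ((X ^ (n-k) * starPoly (φ k)).eval (e θ)) := by
      intro θ
      rw [eval_mul, eval_mul, eval_pow, eval_X, hs, star_eval_phi φ hdeg k]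
      simp only [map_mul, map_pow, Complex.conj_conj]
      have h2 : (starRingEnd ℂ) (e θ) ^ (n - k) * (starRingEnd ℂ) (e θ) ^ k
          = (starRingEnd ℂ) (e θ) ^ n := pow_sub_mul_pow _ hk
      have h3 : (starRingEnd ℂ) (e θ) ^ (n+1)
          = (starRingEnd ℂ) (e θ) ^ n * (starRingEnd ℂ) (e θ) := pow_succ _ _
      rw [h3, ← h2]
      linear_combination ((φ k).eval (e θ) * (φ (n+1)).eval (e θ) *
        ((starRingEnd ℂ) (e θ))^(n-k) * ((starRingEnd ℂ) (e θ))^k) * (e1 θ)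
    have heq : inn μ (bf φ n (k+1)) (bf φ n 0)
        = inn μ (φ (n+1)) (X ^ (n-k) * starPoly (φ k)) := by
      unfold inn bf
      congr 1; funext θ; exact key θ
    rw [heq, inn_conj, inn_low φ hdeg horth n _ (deg_aux φ hdeg n k hk), map_zero]
  intro k l hk hl
  rcases k with _ | k <;> rcases l with _ | l
  · -- (0,0)
    have key : ∀ θ : ℝ, (starPoly (φ (n+1))).eval (e θ)
          * (starRingEnd ℂ) ((starPoly (φ (n+1))).eval (e θ))
        = (φ (n+1)).eval (e θ) * (starRingEnd ℂ) ((φ (n+1)).eval (e θ)) := by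
      intro θ
      rw [hs, map_mul, map_pow, Complex.conj_conj]
      have hp : (e θ)^(n+1) * ((starRingEnd ℂ) (e θ))^(n+1) = 1 := by
        rw [← mul_pow, e1 θ, one_pow]
      linear_combination ((starRingEnd ℂ) ((φ (n+1)).eval (e θ)) * (φ (n+1)).eval (e θ)) * hp
    have heq : inn μ (bf φ n 0) (bf φ n 0) = inn μ (φ (n+1)) (φ (n+1)) := by
      unfold inn bf
      congr 1; funext θ; exact key θ
    rw [heq, inn_phi_phi φ horth]
    simp
  · -- (0, l+1)
    rw [inn_conj, hc10 l (by omega), map_zero, if_neg (by omega)]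
  · -- (k+1, 0)
    rw [hc10 k (by omega), if_neg (by omega)]
  · -- (k+1, l+1)
    have key : ∀ θ : ℝ, (X * φ k).eval (e θ) * (starRingEnd ℂ) ((X * φ l).eval (e θ))
        = (φ k).eval (e θ) * (starRingEnd ℂ) ((φ l).eval (e θ)) := by
      intro θ
      rw [eval_mul, eval_mul, eval_X, map_mul]
      linear_combination ((φ k).eval (e θ) * (starRingEnd ℂ) ((φ l).eval (e θ))) * (e1 θ)
    have heq : inn μ (bf φ n (k+1)) (bf φ n (l+1)) = inn μ (φ k) (φ l) := by
      unfold inn bf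
      congr 1; funext θ; exact key θ
    rw [heq, inn_phi_phi φ horth]
    by_cases h : k = l
    · rw [if_pos h, if_pos (by omega)]
    · rw [if_neg h, if_neg (by omega)]

lemma coeff_extract (N : ℕ) (g : ℕ → Polynomial ℂ)
    (hg : ∀ k l, k < N → l < N → inn μ (g k) (g l) = if k = l then 1 else 0)
    (d : ℕ → ℂ) (l : ℕ) (hl : l < N) :
    inn μ (∑ k ∈ range N, d k • g k) (g l) = d l := by
  rw [inn_sum_left]
  have h : ∀ k ∈ range N, inn μ (d k • g k) (g l) = if k = l then d k else 0 := by
    intro k hk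
    rw [inn_smul_left, hg k l (mem_range.mp hk) hl]
    split_ifs <;> simp
  rw [Finset.sum_congr rfl h, Finset.sum_ite_eq' (range N) l d, if_pos (mem_range.mpr hl)]

include hdeg in
lemma exists_rep_b (n : ℕ) (p : Polynomial ℂ) (hp : p.degree < ((n+2:ℕ) : WithBot ℕ)) :
    ∃ d : ℕ → ℂ, p = ∑ k ∈ range (n+2), d k • bf φ n k := by
  have hs0 : (starPoly (φ (n+1))).coeff 0 ≠ 0 := by
    rw [starPoly, coeff_zero_reverse, leadingCoeff_map]
    simp only [ne_eq, _root_.map_eq_zero, Polynomial.leadingCoeff_eq_zero]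
    exact phi_ne_zero φ hdeg (n+1)
  set c0 := p.coeff 0 / (starPoly (φ (n+1))).coeff 0 with hc0
  set q := p - c0 • starPoly (φ (n+1)) with hq
  have hq0 : q.coeff 0 = 0 := by
    simp only [hq, coeff_sub, coeff_smul, smul_eq_mul, hc0]
    rw [div_mul_cancel₀ _ hs0, sub_self]
  have hXr : X * q.divX = q := by
    have h := X_mul_divX_add q
    rw [hq0, map_zero, add_zero] at h
    exact h
  have hrdeg : q.divX.degree < ((n+1:ℕ) : WithBot ℕ) := by
    rw [degree_lt_iff_coeff_zero]
    intro j hj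
    rw [coeff_divX]
    have hp' : p.coeff (j+1) = 0 := (degree_lt_iff_coeff_zero p (n+2)).mp hp _ (by omega)
    have hs' : (starPoly (φ (n+1))).coeff (j+1) = 0 :=
      coeff_eq_zero_of_natDegree_lt (lt_of_le_of_lt (star_natDegree_le φ hdeg (n+1)) (by omega))
    simp [hq, hp', hs']
  obtain ⟨c, hc⟩ := exists_rep φ hdeg n q.divX hrdeg
  refine ⟨fun k => if k = 0 then c0 else c (k-1), ?_⟩
  rw [Finset.sum_range_succ']
  simp only [reduceIte]
  have hterm : ∀ j ∈ range (n+1),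
      (if j+1 = 0 then c0 else c (j+1-1)) • bf φ n (j+1) = c j • (X * φ j) := by
    intro j hj
    rw [if_neg (Nat.succ_ne_zero j)]
    rfl
  rw [Finset.sum_congr rfl hterm]
  have hsum : ∑ j ∈ range (n+1), c j • (X * φ j) = X * q.divX := by
    rw [hc, Finset.mul_sum]
    exact Finset.sum_congr rfl fun j hj => (mul_smul_comm _ _ _).symm
  rw [hsum, hXr, hq]
  show p = p - c0 • starPoly (φ (n+1)) + c0 • starPoly (φ (n+1))
  ring

include hdeg horth in
lemma rep_phi (n j : ℕ) (hj : j < n+2) :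
    φ j = ∑ k ∈ range (n+2), (inn μ (φ j) (bf φ n k)) • bf φ n k := by
  have hdj : (φ j).degree < ((n+2:ℕ) : WithBot ℕ) := by
    rw [hdeg j]; exact_mod_cast hj
  obtain ⟨d, hd⟩ := exists_rep_b φ hdeg n (φ j) hdj
  have h : ∀ k ∈ range (n+2), (inn μ (φ j) (bf φ n k)) • bf φ n k = d k • bf φ n k := by
    intro k hk
    congr 1
    rw [hd, coeff_extract (n+2) (bf φ n) (inn_bb φ hdeg horth n) d k (mem_range.mp hk)]
  rw [Finset.sum_congr rfl h]
  exact hd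

include hdeg horth in
lemma rep_b (n k : ℕ) (hk : k < n+2) :
    bf φ n k = ∑ j ∈ range (n+2), (inn μ (bf φ n k) (φ j)) • φ j := by
  have hdb : (bf φ n k).degree < ((n+2:ℕ) : WithBot ℕ) := by
    rw [degree_lt_iff_coeff_zero]
    intro j hj
    apply coeff_eq_zero_of_natDegree_lt
    rcases k with _ | k
    · exact lt_of_le_of_lt (star_natDegree_le φ hdeg (n+1)) (by omega)
    · show (X * φ k).natDegree < j
      have h1 := natDegree_mul_le (p := (X : Polynomial ℂ)) (q := φ k)
      rw [natDegree_X, phi_natDegree φ hdeg] at h1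
      omega
  obtain ⟨d, hd⟩ := exists_rep φ hdeg (n+1) (bf φ n k) hdb
  have h : ∀ j ∈ range (n+2), (inn μ (bf φ n k) (φ j)) • φ j = d j • φ j := by
    intro j hj
    congr 1
    rw [hd, coeff_extract (n+2) φ (fun a b _ _ => inn_phi_phi φ horth a b) d j (mem_range.mp hj)]
  rw [Finset.sum_congr rfl h]
  exact hd

include hdeg horth in
lemma parseval (n k l : ℕ) (hk : k < n+2) (hl : l < n+2) :
    ∑ j ∈ range (n+2), inn μ (φ j) (bf φ n k) * (starRingEnd ℂ) (inn μ (φ j) (bf φ n l))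
      = if k = l then 1 else 0 := by
  have h1 : inn μ (bf φ n k) (bf φ n l) = ∑ j ∈ range (n+2),
      inn μ (bf φ n k) (φ j) * (starRingEnd ℂ) (inn μ (bf φ n l) (φ j)) := by
    nth_rewrite 1 [rep_b φ hdeg horth n k hk]
    rw [inn_sum_left]
    refine Finset.sum_congr rfl fun j hj => ?_
    rw [inn_smul_left, inn_conj (bf φ n l) (φ j)]
  have h2 : ∀ j : ℕ, inn μ (φ j) (bf φ n k) * (starRingEnd ℂ) (inn μ (φ j) (bf φ n l))
      = (starRingEnd ℂ) (inn μ (bf φ n k) (φ j) * (starRingEnd ℂ) (inn μ (bf φ n l) (φ j))) := by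
    intro j
    rw [inn_conj (bf φ n k) (φ j), inn_conj (bf φ n l) (φ j)]
    simp only [map_mul, Complex.conj_conj]
  rw [Finset.sum_congr rfl (fun j _ => h2 j), ← map_sum, ← h1,
    inn_bb φ hdeg horth n k l hk hl]
  split_ifs <;> simp

include hdeg horth in
lemma kernel_eq (n : ℕ) (z w : ℂ) :
    ∑ j ∈ range (n+2), (φ j).eval z * (starRingEnd ℂ) ((φ j).eval w)
    = ∑ k ∈ range (n+2), (bf φ n k).eval z * (starRingEnd ℂ) ((bf φ n k).eval w) := by
  have hstep : ∀ j ∈ range (n+2), (φ j).eval z * (starRingEnd ℂ) ((φ j).eval w)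
      = ∑ k ∈ range (n+2), ∑ l ∈ range (n+2),
          (inn μ (φ j) (bf φ n k) * (starRingEnd ℂ) (inn μ (φ j) (bf φ n l)))
          * ((bf φ n k).eval z * (starRingEnd ℂ) ((bf φ n l).eval w)) := by
    intro j hj
    nth_rewrite 1 [rep_phi φ hdeg horth n j (mem_range.mp hj)]
    nth_rewrite 2 [rep_phi φ hdeg horth n j (mem_range.mp hj)]
    rw [eval_finset_sum, eval_finset_sum, map_sum, Finset.sum_mul_sum]
    refine Finset.sum_congr rfl fun k hk => Finset.sum_congr rfl fun l hl => ?_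
    simp only [eval_smul, smul_eq_mul, map_mul]
    ring
  rw [Finset.sum_congr rfl hstep]
  rw [Finset.sum_comm]
  have hswap : ∀ k ∈ range (n+2), ∑ j ∈ range (n+2), ∑ l ∈ range (n+2),
        (inn μ (φ j) (bf φ n k) * (starRingEnd ℂ) (inn μ (φ j) (bf φ n l)))
        * ((bf φ n k).eval z * (starRingEnd ℂ) ((bf φ n l).eval w))
      = ∑ l ∈ range (n+2), (if k = l then (1:ℂ) else 0)
        * ((bf φ n k).eval z * (starRingEnd ℂ) ((bf φ n l).eval w)) := by
    intro k hk
    rw [Finset.sum_comm]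
    refine Finset.sum_congr rfl fun l hl => ?_
    rw [← Finset.sum_mul, parseval φ hdeg horth n k l (mem_range.mp hk) (mem_range.mp hl)]
  rw [Finset.sum_congr rfl hswap]
  refine Finset.sum_congr rfl fun k hk => ?_
  have : ∀ l ∈ range (n+2), (if k = l then (1:ℂ) else 0)
      * ((bf φ n k).eval z * (starRingEnd ℂ) ((bf φ n l).eval w))
      = if k = l then (bf φ n k).eval z * (starRingEnd ℂ) ((bf φ n l).eval w) else 0 := by
    intro l hl
    split_ifs <;> simp
  rw [Finset.sum_congr rfl this, Finset.sum_ite_eq (range (n+2)) k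
    (fun l => (bf φ n k).eval z * (starRingEnd ℂ) ((bf φ n l).eval w)),
    if_pos hk]

include hdeg horth in
lemma CD (n : ℕ) (z w : ℂ) :
    (starPoly (φ (n+1))).eval z * (starRingEnd ℂ) ((starPoly (φ (n+1))).eval w)
      + z * (starRingEnd ℂ) w *
        ∑ j ∈ range (n+1), (φ j).eval z * (starRingEnd ℂ) ((φ j).eval w)
    = (∑ j ∈ range (n+1), (φ j).eval z * (starRingEnd ℂ) ((φ j).eval w))
      + (φ (n+1)).eval z * (starRingEnd ℂ) ((φ (n+1)).eval w) := by
  have h := kernel_eq φ hdeg horth n z w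
  conv at h => lhs; rw [Finset.sum_range_succ]
  conv at h => rhs; rw [Finset.sum_range_succ']
  have hsum : ∑ k ∈ range (n+1), (bf φ n (k+1)).eval z
        * (starRingEnd ℂ) ((bf φ n (k+1)).eval w)
      = z * (starRingEnd ℂ) w
        * ∑ j ∈ range (n+1), (φ j).eval z * (starRingEnd ℂ) ((φ j).eval w) := by
    rw [Finset.mul_sum]
    refine Finset.sum_congr rfl fun k hk => ?_
    show (X * φ k).eval z * (starRingEnd ℂ) ((X * φ k).eval w) = _
    simp only [eval_mul, eval_X, map_mul]
    ring
  rw [hsum] at h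
  have hb0 : bf φ n 0 = starPoly (φ (n+1)) := rfl
  rw [hb0] at h
  linear_combination -h

end Main
end CD01


/-- differentiated Christoffel–Darboux formula:
`Σ_{j=0}^n φ_j(z)·conj(φ_j′(w)) = (S_n(z,w) + z·K_n(z,w))/(1 − z·conj(w))`. -/
theorem christoffel_darboux_derivative_01
    (μ : Measure ℝ) [IsProbabilityMeasure μ]
    (φ : ℕ → Polynomial ℂ)
    (hdeg : ∀ k, (φ k).degree = k)
    (hlead : ∀ k, ∃ κ : ℝ, 0 < κ ∧ (φ k).leadingCoeff = (κ : ℂ))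
    (horth : ∀ n m, ∫ θ, (φ n).eval (Complex.exp (θ * Complex.I)) *
        (starRingEnd ℂ) ((φ m).eval (Complex.exp (θ * Complex.I))) ∂μ
        = if n = m then 1 else 0)
    (n : ℕ) (z w : ℂ) (hzw : z * (starRingEnd ℂ) w ≠ 1)
    (K S : ℂ)
    (hK : K = ∑ j ∈ Finset.range (n + 1),
        (φ j).eval z * (starRingEnd ℂ) ((φ j).eval w))
    (hS : S = (starRingEnd ℂ) ((starPoly (φ (n+1))).derivative.eval w) *
          (starPoly (φ (n+1))).eval z
        - (starRingEnd ℂ) ((φ (n+1)).derivative.eval w) * (φ (n+1)).eval z) :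
    ∑ j ∈ Finset.range (n + 1),
        (φ j).eval z * (starRingEnd ℂ) ((φ j).derivative.eval w)
      = (S + z * K) / (1 - z * (starRingEnd ℂ) w) := by
  classical
  have hconj_eval : ∀ (p : Polynomial ℂ) (u : ℂ),
      (p.map (starRingEnd ℂ)).eval u = (starRingEnd ℂ) (p.eval ((starRingEnd ℂ) u)) := by
    intro p u
    conv_lhs => rw [show u = (starRingEnd ℂ) ((starRingEnd ℂ) u) from (Complex.conj_conj u).symm]
    rw [Polynomial.eval_map, Polynomial.eval₂_at_apply]
  set u₀ := (starRingEnd ℂ) w with hu₀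
  have hu₀w : (starRingEnd ℂ) u₀ = w := Complex.conj_conj w
  set sP := starPoly (φ (n+1)) with hsP
  set φm := φ (n+1) with hφm
  set P : Polynomial ℂ := ∑ j ∈ range (n+1), ((φ j).eval z) • ((φ j).map (starRingEnd ℂ))
    with hP
  set G : Polynomial ℂ := (sP.eval z) • (sP.map (starRingEnd ℂ))
      - (φm.eval z) • (φm.map (starRingEnd ℂ)) - (1 - C z * X) * P with hG
  have hPeval : ∀ u : ℂ, P.eval u
      = ∑ j ∈ range (n+1), (φ j).eval z
          * (starRingEnd ℂ) ((φ j).eval ((starRingEnd ℂ) u)) := by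
    intro u
    rw [hP, eval_finset_sum]
    exact Finset.sum_congr rfl fun j hj => by rw [eval_smul, smul_eq_mul, hconj_eval]
  have hG0 : G = 0 := by
    apply Polynomial.funext
    intro u
    rw [eval_zero, hG]
    have h := CD01.CD φ hdeg horth n z ((starRingEnd ℂ) u)
    rw [Complex.conj_conj] at h
    simp only [eval_sub, eval_mul, eval_smul, smul_eq_mul, eval_one, eval_C, eval_X]
    rw [hconj_eval, hconj_eval, hPeval]
    rw [← hφm, ← hsP] at h
    linear_combination h
  have hPd : Polynomial.derivative P
      = ∑ j ∈ range (n+1), ((φ j).eval z)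
          • ((Polynomial.derivative (φ j)).map (starRingEnd ℂ)) := by
    rw [hP, derivative_sum]
    exact Finset.sum_congr rfl fun j _ => by rw [derivative_smul, derivative_map]
  have h0 : (Polynomial.derivative G).eval u₀ = 0 := by rw [hG0]; simp
  have hcalc : (Polynomial.derivative G).eval u₀
      = sP.eval z * (starRingEnd ℂ) ((Polynomial.derivative sP).eval w)
        - φm.eval z * (starRingEnd ℂ) ((Polynomial.derivative φm).eval w)
        - ((- z) * P.eval u₀ + (1 - z * u₀) *
          (∑ j ∈ range (n+1), (φ j).eval z
            * (starRingEnd ℂ) ((Polynomial.derivative (φ j)).eval w))) := by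
    rw [hG]
    rw [derivative_sub, derivative_sub, derivative_smul, derivative_smul, derivative_mul,
      derivative_map, derivative_map, hPd]
    simp only [derivative_sub, derivative_one, derivative_mul, derivative_C, derivative_X,
      zero_sub, zero_mul, mul_one, zero_add, eval_sub, eval_add, eval_mul, eval_smul,
      smul_eq_mul, eval_one, eval_C, eval_X, eval_neg, eval_finset_sum]
    rw [hconj_eval, hconj_eval, hu₀w]
    have : ∀ j ∈ range (n+1), (φ j).eval z
          * ((Polynomial.derivative (φ j)).map (starRingEnd ℂ)).eval u₀
        = (φ j).eval z * (starRingEnd ℂ) ((Polynomial.derivative (φ j)).eval w) := by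
      intro j hj
      rw [hconj_eval, hu₀w]
    rw [Finset.sum_congr rfl this]
  rw [hcalc, hPeval u₀, hu₀w] at h0
  rw [eq_div_iff (sub_ne_zero.mpr (Ne.symm hzw))]
  rw [hK, hS]
  linear_combination -h0
end
end

section
/- Let {φ_k} be OPUC for a Borel probability measure μ on the unit circle. For z, w ∈ ℂ with z·conj(w) ≠ 1, Σ_{j=0}^n φ_j′(z)·conj(φ_j′(w)) = ( R_n(z,w)·(1 − z·conj(w)) + z·conj(S_n(w,z)) + conj(w)·S_n(z,w) + (1 + z·conj(w))·K_n(z,w) ) / ( 1 − z·conj(w) )², where K_n(z,w) = Σ_{j=0}^n φ_j(z)·conj(φ_j(w)), S_n(z,w) = conj( (φ_{n+1}^*)′(w) )·φ_{n+1}^*(z) − conj( φ_{n+1}′(w) )·φ_{n+1}(z), and R_n(z,w) = conj( (φ_{n+1}^*)′(w) )·(φ_{n+1}^*)′(z) − conj( φ_{n+1}′(w) )·φ_{n+1}′(z). -/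
open MeasureTheory Polynomial Finset

noncomputable section

-- reverse eval
lemma reverse_eval {p : Polynomial ℂ} {z : ℂ} (hz : z ≠ 0) :
    p.reverse.eval z = p.eval z⁻¹ * z ^ p.natDegree := by
  have : Invertible z⁻¹ := invertibleOfNonzero (inv_ne_zero hz)
  have h := Polynomial.eval₂_reverse_mul_pow (RingHom.id ℂ) z⁻¹ p
  simp only [eval₂_eq_eval_map, Polynomial.map_id] at h
  rw [← h]
  rw [invOf_eq_inv, inv_inv, mul_assoc, ← mul_pow, inv_mul_cancel₀ hz, one_pow, mul_one]

lemma eval_map_conj (p : Polynomial ℂ) (w : ℂ) :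
    (p.map (starRingEnd ℂ)).eval ((starRingEnd ℂ) w) = (starRingEnd ℂ) (p.eval w) := by
  rw [eval_map, eval₂_at_apply]

lemma starPoly_eval (p : Polynomial ℂ) {z : ℂ} (hz : z * (starRingEnd ℂ) z = 1) :
    (starPoly p).eval z = z ^ p.natDegree * (starRingEnd ℂ) (p.eval z) := by
  have hz0 : z ≠ 0 := by rintro rfl; simp at hz
  have hinv : z⁻¹ = (starRingEnd ℂ) z := by
    exact inv_eq_of_mul_eq_one_right hz
  rw [starPoly, reverse_eval hz0, hinv, eval_map_conj,
    Polynomial.natDegree_map (starRingEnd ℂ), mul_comm]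

lemma eval_norm_bound (p : Polynomial ℂ) {z : ℂ} (hz : ‖z‖ = 1) :
    ‖p.eval z‖ ≤ ∑ i ∈ range (p.natDegree + 1), ‖p.coeff i‖ := by
  rw [Polynomial.eval_eq_sum_range]
  refine (norm_sum_le _ _).trans (Finset.sum_le_sum fun i _ => ?_)
  rw [norm_mul, norm_pow, hz, one_pow, mul_one]

def circ (θ : ℝ) : ℂ := Complex.exp (θ * Complex.I)

lemma norm_circ (θ : ℝ) : ‖circ θ‖ = 1 := by
  simp [circ, Complex.norm_exp_ofReal_mul_I]

lemma circ_mul_conj (θ : ℝ) : circ θ * (starRingEnd ℂ) (circ θ) = 1 := by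
  have := norm_circ θ
  rw [Complex.mul_conj]
  norm_cast
  rw [Complex.normSq_eq_norm_sq, this, one_pow]

def inn (μ : Measure ℝ) (p q : Polynomial ℂ) : ℂ :=
  ∫ θ, p.eval (circ θ) * (starRingEnd ℂ) (q.eval (circ θ)) ∂μ

lemma integrable_inn (μ : Measure ℝ) [IsFiniteMeasure μ] (p q : Polynomial ℂ) :
    Integrable (fun θ : ℝ => p.eval (circ θ) * (starRingEnd ℂ) (q.eval (circ θ))) μ := by
  have hc : Continuous fun θ : ℝ => p.eval (circ θ) * (starRingEnd ℂ) (q.eval (circ θ)) := by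
    have h1 : Continuous circ := by unfold circ; fun_prop
    exact ((p.continuous_aeval.comp h1)).mul
      (Complex.continuous_conj.comp (q.continuous_aeval.comp h1))
  refine (integrable_const ((∑ i ∈ range (p.natDegree + 1), ‖p.coeff i‖) *
      (∑ i ∈ range (q.natDegree + 1), ‖q.coeff i‖))).mono' hc.aestronglyMeasurable ?_
  filter_upwards with θ
  rw [norm_mul, RCLike.norm_conj]
  exact mul_le_mul (eval_norm_bound p (norm_circ θ)) (eval_norm_bound q (norm_circ θ))
    (norm_nonneg _) (Finset.sum_nonneg fun i _ => norm_nonneg _)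

lemma inn_sum_smul_left (μ : Measure ℝ) [IsFiniteMeasure μ] {s : Finset ℕ}
    (c : ℕ → ℂ) (f : ℕ → Polynomial ℂ) (q : Polynomial ℂ) :
    inn μ (∑ j ∈ s, c j • f j) q = ∑ j ∈ s, c j * inn μ (f j) q := by
  unfold inn
  have h1 : ∀ j ∈ s, Integrable (fun θ : ℝ =>
      c j * (eval (circ θ) (f j) * (starRingEnd ℂ) (eval (circ θ) q))) μ :=
    fun j _ => (integrable_inn μ (f j) q).const_mul (c j)
  calc (∫ θ, eval (circ θ) (∑ j ∈ s, c j • f j) * (starRingEnd ℂ) (eval (circ θ) q) ∂μ)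
      = ∫ θ, ∑ j ∈ s, c j * (eval (circ θ) (f j) * (starRingEnd ℂ) (eval (circ θ) q)) ∂μ := by
        congr 1; funext θ
        rw [eval_finset_sum, Finset.sum_mul]
        exact Finset.sum_congr rfl fun j _ => by rw [eval_smul, smul_eq_mul]; ring
    _ = ∑ j ∈ s, ∫ θ, c j * (eval (circ θ) (f j) * (starRingEnd ℂ) (eval (circ θ) q)) ∂μ :=
        integral_finset_sum s h1
    _ = ∑ j ∈ s, c j * ∫ θ, eval (circ θ) (f j) * (starRingEnd ℂ) (eval (circ θ) q) ∂μ :=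
        Finset.sum_congr rfl fun j _ => by
          rw [← smul_eq_mul, ← integral_smul]; simp only [smul_eq_mul]

lemma inn_conj_symm (μ : Measure ℝ) (p q : Polynomial ℂ) :
    (starRingEnd ℂ) (inn μ p q) = inn μ q p := by
  unfold inn
  rw [← integral_conj]
  congr 1; funext θ
  simp only [map_mul, RingHomCompTriple.comp_apply, RingHom.id_apply]
  ring

lemma inn_X_mul (μ : Measure ℝ) (p q : Polynomial ℂ) :
    inn μ (X * p) (X * q) = inn μ p q := by
  unfold inn
  congr 1; funext θ
  simp only [eval_mul, eval_X, map_mul]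
  linear_combination (p.eval (circ θ) * (starRingEnd ℂ) (q.eval (circ θ))) * circ_mul_conj θ

lemma inn_star_self (μ : Measure ℝ) (p : Polynomial ℂ) :
    inn μ (starPoly p) (starPoly p) = inn μ p p := by
  unfold inn
  congr 1; funext θ
  rw [starPoly_eval p (circ_mul_conj θ)]
  set u := circ θ
  set a := p.eval u
  have h : u ^ p.natDegree * ((starRingEnd ℂ) u) ^ p.natDegree = 1 := by
    rw [← mul_pow, circ_mul_conj, one_pow]
  simp only [map_mul, map_pow, Complex.conj_conj]
  linear_combination ((starRingEnd ℂ) a * a) * h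

lemma onbasis_kernel {N : ℕ} (U : Matrix (Fin N) (Fin N) ℂ)
    (hU : U * U.conjTranspose = 1) (x y : Fin N → ℂ) :
    ∑ i, (∑ j, U i j * x j) * (starRingEnd ℂ) (∑ k, U i k * y k)
      = ∑ j, x j * (starRingEnd ℂ) (y j) := by
  have key : ∀ j k : Fin N, (∑ i, U i j * (starRingEnd ℂ) (U i k))
      = if k = j then 1 else 0 := by
    intro j k
    have h2 := congrFun (congrFun (show U.conjTranspose * U = 1 from mul_eq_one_comm.mp hU) k) j
    simp only [Matrix.mul_apply, Matrix.conjTranspose_apply, Matrix.one_apply] at h2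
    rw [← h2]
    exact Finset.sum_congr rfl fun i _ => by rw [Complex.star_def]; ring
  calc ∑ i, (∑ j, U i j * x j) * (starRingEnd ℂ) (∑ k, U i k * y k)
      = ∑ i, ∑ j, ∑ k, (U i j * (starRingEnd ℂ) (U i k)) * (x j * (starRingEnd ℂ) (y k)) := by
        refine Finset.sum_congr rfl fun i _ => ?_
        rw [map_sum, Finset.sum_mul_sum]
        exact Finset.sum_congr rfl fun j _ => Finset.sum_congr rfl fun k _ => by
          rw [map_mul]; ring
    _ = ∑ j, ∑ k, (∑ i, U i j * (starRingEnd ℂ) (U i k)) * (x j * (starRingEnd ℂ) (y k)) := by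
        rw [Finset.sum_comm]
        refine Finset.sum_congr rfl fun j _ => ?_
        rw [Finset.sum_comm]
        exact Finset.sum_congr rfl fun k _ => by rw [Finset.sum_mul]
    _ = ∑ j, x j * (starRingEnd ℂ) (y j) := by
        refine Finset.sum_congr rfl fun j _ => ?_
        have h3 : ∀ k ∈ (univ : Finset (Fin N)), (∑ i, U i j * (starRingEnd ℂ) (U i k))
            * (x j * (starRingEnd ℂ) (y k))
            = if k = j then x j * (starRingEnd ℂ) (y k) else 0 := fun k _ => by
          rw [key]; split_ifs <;> simp
        rw [Finset.sum_congr rfl h3, Finset.sum_ite_eq' univ j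
          (fun k => x j * (starRingEnd ℂ) (y k)), if_pos (Finset.mem_univ j)]

section Phi
variable (μ : Measure ℝ) [IsProbabilityMeasure μ] (φ : ℕ → Polynomial ℂ)
  (hdeg : ∀ k, (φ k).degree = k)
  (hlead : ∀ k, ∃ κ : ℝ, 0 < κ ∧ (φ k).leadingCoeff = (κ : ℂ))
  (horth : ∀ n m, inn μ (φ n) (φ m) = if n = m then 1 else 0)

include hdeg hlead in
lemma span_phi : ∀ (m : ℕ) (p : Polynomial ℂ), p.degree < (m : ℕ) →
    ∃ c : ℕ → ℂ, p = ∑ j ∈ range m, c j • φ j := by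
  intro m
  induction m with
  | zero =>
    intro p hp
    refine ⟨0, ?_⟩
    simp only [range_zero, Finset.sum_empty]
    rw [← Polynomial.degree_eq_bot]
    exact Nat.WithBot.lt_zero_iff.mp (by exact_mod_cast hp)
  | succ m ih =>
    intro p hp
    have hple : p.degree ≤ (m : ℕ) := by
      refine (Polynomial.degree_le_iff_coeff_zero _ _).mpr fun k hk => ?_
      refine (Polynomial.degree_lt_iff_coeff_zero _ _).mp hp k ?_
      exact Nat.succ_le_of_lt (by exact_mod_cast hk)
    have hnd : (φ m).natDegree = m := natDegree_eq_of_degree_eq_some (hdeg m)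
    have ha : (φ m).coeff m ≠ 0 := by
      rw [show (φ m).coeff m = (φ m).leadingCoeff by rw [Polynomial.leadingCoeff, hnd]]
      obtain ⟨κ, hκ, hl⟩ := hlead m
      rw [hl]
      exact_mod_cast hκ.ne'
    set d := p.coeff m / (φ m).coeff m with hd
    have hq : (p - d • φ m).degree < (m : ℕ) := by
      rw [Polynomial.degree_lt_iff_coeff_zero]
      intro k hk
      rw [Polynomial.coeff_sub, Polynomial.coeff_smul, smul_eq_mul]
      rcases eq_or_lt_of_le hk with h | h
      · rw [← h, hd, div_mul_cancel₀ _ ha, sub_self]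
      · rw [Polynomial.coeff_eq_zero_of_degree_lt (lt_of_le_of_lt hple (by exact_mod_cast h)),
          Polynomial.coeff_eq_zero_of_degree_lt (by rw [hdeg m]; exact_mod_cast h),
          mul_zero, sub_zero]
    obtain ⟨c, hc⟩ := ih (p - d • φ m) hq
    refine ⟨fun j => if j = m then d else c j, ?_⟩
    rw [Finset.sum_range_succ]
    have h2 : ∀ j ∈ range m, (if j = m then d else c j) • φ j = c j • φ j :=
      fun j hj => by rw [if_neg (Finset.mem_range.mp hj).ne]
    rw [Finset.sum_congr rfl h2, ← hc]
    simp only [eq_self_iff_true, if_true]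
    exact (sub_add_cancel _ _).symm

include hdeg hlead horth in
lemma expand_phi (m : ℕ) (p : Polynomial ℂ) (hp : p.degree < ((m + 1 : ℕ) : WithBot ℕ)) :
    p = ∑ j ∈ range (m + 1), inn μ p (φ j) • φ j := by
  obtain ⟨c, hc⟩ := span_phi φ hdeg hlead (m + 1) p hp
  have hinn : ∀ k ∈ range (m + 1), inn μ p (φ k) = c k := by
    intro k hk
    rw [hc, inn_sum_smul_left]
    have h2 : ∀ j ∈ range (m + 1), c j * inn μ (φ j) (φ k)
        = if j = k then c j else 0 := by
      intro j _
      rw [horth]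
      split_ifs <;> simp
    rw [Finset.sum_congr rfl h2, Finset.sum_ite_eq' (range (m + 1)) k c, if_pos hk]
  conv_lhs => rw [hc]
  exact Finset.sum_congr rfl fun j hj => by rw [hinn j hj]

include hdeg hlead horth in
lemma inn_lower (p : Polynomial ℂ) (N : ℕ) (hp : p.degree < (N : ℕ)) :
    inn μ p (φ N) = 0 := by
  obtain ⟨c, hc⟩ := span_phi φ hdeg hlead N p hp
  rw [hc, inn_sum_smul_left]
  refine Finset.sum_eq_zero fun j hj => ?_
  rw [horth, if_neg (Finset.mem_range.mp hj).ne, mul_zero]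

omit [IsProbabilityMeasure μ] in
include hdeg in
lemma starPoly_deg_le (j : ℕ) : (starPoly (φ j)).degree ≤ (j : ℕ) := by
  refine le_trans (Polynomial.degree_le_natDegree) ?_
  have : (starPoly (φ j)).natDegree ≤ j := by
    refine le_trans (Polynomial.reverse_natDegree_le _) ?_
    rw [Polynomial.natDegree_map, natDegree_eq_of_degree_eq_some (hdeg j)]
  exact_mod_cast this

include hdeg hlead horth in
lemma inn_cross (n j : ℕ) (hj : j ≤ n) :
    inn μ (X * φ j) (starPoly (φ (n + 1))) = 0 := by
  obtain ⟨k, rfl⟩ : ∃ k, n = j + k := ⟨n - j, (Nat.add_sub_cancel' hj).symm⟩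
  have hndj : (φ j).natDegree = j := natDegree_eq_of_degree_eq_some (hdeg j)
  have hndn : (φ (j + k + 1)).natDegree = j + k + 1 :=
    natDegree_eq_of_degree_eq_some (hdeg (j + k + 1))
  set q := X ^ k * starPoly (φ j) with hqdef
  have hqdeg : q.degree < ((j + k + 1 : ℕ) : WithBot ℕ) := by
    refine lt_of_le_of_lt (Polynomial.degree_mul_le _ _) ?_
    refine lt_of_le_of_lt (add_le_add (le_of_eq (Polynomial.degree_X_pow k))
      (starPoly_deg_le φ hdeg j)) ?_
    rw [show ((k : ℕ) : WithBot ℕ) + ((j : ℕ) : WithBot ℕ) = ((k + j : ℕ) : WithBot ℕ)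
      by exact_mod_cast rfl]
    exact_mod_cast by omega
  have he : inn μ (X * φ j) (starPoly (φ (j + k + 1))) = inn μ (φ (j + k + 1)) q := by
    unfold inn
    congr 1; funext θ
    have huv : circ θ * (starRingEnd ℂ) (circ θ) = 1 := circ_mul_conj θ
    simp only [hqdef, eval_mul, eval_pow, eval_X]
    rw [starPoly_eval (φ (j + k + 1)) huv, starPoly_eval (φ j) huv, hndj, hndn]
    set u := circ θ
    set v := (starRingEnd ℂ) u with hv
    set a := (φ j).eval u
    set bb := (φ (j + k + 1)).eval u
    simp only [map_mul, map_pow, Complex.conj_conj, ← hv]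
    linear_combination (a * bb * v ^ (j + k)) * huv
  rw [he, ← inn_conj_symm μ q (φ (j + k + 1)),
    inn_lower μ φ hdeg hlead horth q (j + k + 1) hqdeg, map_zero]

omit [IsProbabilityMeasure μ] in
include hdeg in
lemma phi_ne_zero (k : ℕ) : (φ k).degree < ((k + 1 : ℕ) : WithBot ℕ) := by
  rw [hdeg k]; exact_mod_cast Nat.lt_succ_self k

include hdeg hlead horth in
lemma cd (n : ℕ) (z w : ℂ) :
    (1 - z * (starRingEnd ℂ) w) *
      ∑ j ∈ range (n + 1), (φ j).eval z * (starRingEnd ℂ) ((φ j).eval w)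
    = (starPoly (φ (n + 1))).eval z * (starRingEnd ℂ) ((starPoly (φ (n + 1))).eval w)
      - (φ (n + 1)).eval z * (starRingEnd ℂ) ((φ (n + 1)).eval w) := by
  classical
  set b : Fin (n + 2) → Polynomial ℂ :=
    fun i => if (i : ℕ) < n + 1 then X * φ (i : ℕ) else starPoly (φ (n + 1)) with hbdef
  have hbdeg : ∀ i, (b i).degree < ((n + 2 : ℕ) : WithBot ℕ) := by
    intro i
    rw [hbdef]
    dsimp only
    split_ifs with h
    · refine lt_of_le_of_lt (Polynomial.degree_mul_le _ _) ?_
      rw [Polynomial.degree_X, hdeg (i : ℕ)]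
      rw [show (1 : WithBot ℕ) + ((i : ℕ) : WithBot ℕ) = ((1 + (i : ℕ) : ℕ) : WithBot ℕ)
        by exact_mod_cast rfl]
      exact_mod_cast by omega
    · exact lt_of_le_of_lt (starPoly_deg_le φ hdeg (n + 1)) (by exact_mod_cast by omega)
  have hON : ∀ i i' : Fin (n + 2), inn μ (b i) (b i') = if i = i' then 1 else 0 := by
    intro i i'
    rw [hbdef]
    dsimp only
    rcases lt_or_ge (i : ℕ) (n + 1) with hi | hi <;>
      rcases lt_or_ge (i' : ℕ) (n + 1) with hi' | hi'
    · rw [if_pos hi, if_pos hi', inn_X_mul, horth]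
      congr 1
      simp [Fin.ext_iff, eq_iff_iff]
    · rw [if_pos hi, if_neg (not_lt.mpr hi'), inn_cross μ φ hdeg hlead horth n _
        (by omega), if_neg (by intro h; rw [h] at hi; omega)]
    · rw [if_neg (not_lt.mpr hi), if_pos hi',
        ← inn_conj_symm, inn_cross μ φ hdeg hlead horth n _ (by omega), map_zero,
        if_neg (by intro h; rw [h] at hi; omega)]
    · have e1 : (i : ℕ) = n + 1 := by omega
      have e2 : (i' : ℕ) = n + 1 := by omega
      rw [if_neg (not_lt.mpr hi), if_neg (not_lt.mpr hi'), inn_star_self, horth,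
        if_pos rfl, if_pos (by rw [Fin.ext_iff, e1, e2])]
  set U : Matrix (Fin (n + 2)) (Fin (n + 2)) ℂ :=
    fun i j => inn μ (b i) (φ (j : ℕ)) with hUdef
  have hexp : ∀ i, b i = ∑ j ∈ range (n + 2), inn μ (b i) (φ j) • φ j :=
    fun i => expand_phi μ φ hdeg hlead horth (n + 1) (b i) (hbdeg i)
  have hrow : U * U.conjTranspose = 1 := by
    ext i i'
    rw [Matrix.mul_apply, Matrix.one_apply]
    have : ∀ j : Fin (n + 2), U i j * U.conjTranspose j i'
        = inn μ (b i) (φ (j : ℕ)) * (starRingEnd ℂ) (inn μ (b i') (φ (j : ℕ))) := by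
      intro j
      rw [Matrix.conjTranspose_apply, hUdef]
      rfl
    rw [Finset.sum_congr rfl fun j _ => this j]
    rw [Fin.sum_univ_eq_sum_range
      (fun j => inn μ (b i) (φ j) * (starRingEnd ℂ) (inn μ (b i') (φ j))) (n + 2)]
    have hbb : inn μ (b i) (b i')
        = ∑ j ∈ range (n + 2), inn μ (b i) (φ j) * (starRingEnd ℂ) (inn μ (b i') (φ j)) := by
      conv_lhs => rw [hexp i]
      rw [inn_sum_smul_left]
      exact Finset.sum_congr rfl fun j _ => by rw [← inn_conj_symm μ (b i') (φ j)]
    rw [← hbb, hON i i']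
  have hker := onbasis_kernel U hrow (fun j => (φ (j : ℕ)).eval z)
    (fun j => (φ (j : ℕ)).eval w)
  have hbeval : ∀ (i : Fin (n + 2)) (x : ℂ), (b i).eval x = ∑ j : Fin (n + 2), U i j * (φ (j : ℕ)).eval x := by
    intro i x
    conv_lhs => rw [hexp i]
    rw [eval_finset_sum]
    rw [← Fin.sum_univ_eq_sum_range (fun j => ((inn μ (b i) (φ j)) • φ j).eval x) (n + 2)]
    exact Finset.sum_congr rfl fun j _ => by rw [eval_smul, smul_eq_mul]
  have hker2 : ∑ i : Fin (n + 2), (b i).eval z * (starRingEnd ℂ) ((b i).eval w)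
      = ∑ j ∈ range (n + 2), (φ j).eval z * (starRingEnd ℂ) ((φ j).eval w) := by
    rw [← Fin.sum_univ_eq_sum_range (fun j => (φ j).eval z * (starRingEnd ℂ) ((φ j).eval w)) (n + 2), ← hker]
    exact Finset.sum_congr rfl fun i _ => by rw [hbeval i z, hbeval i w]
  rw [Fin.sum_univ_castSucc] at hker2
  have hblast : b (Fin.last (n + 1)) = starPoly (φ (n + 1)) := by
    rw [hbdef]; simp
  have hbcast : ∀ i : Fin (n + 1), b i.castSucc = X * φ (i : ℕ) := by
    intro i
    rw [hbdef]
    simp only [Fin.coe_castSucc]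
    rw [if_pos i.isLt]
  have hsplit : ∑ i : Fin (n + 1), (b i.castSucc).eval z * (starRingEnd ℂ) ((b i.castSucc).eval w)
      = z * (starRingEnd ℂ) w *
        ∑ j ∈ range (n + 1), (φ j).eval z * (starRingEnd ℂ) ((φ j).eval w) := by
    rw [Finset.mul_sum, ← Fin.sum_univ_eq_sum_range (fun j => z * (starRingEnd ℂ) w * ((φ j).eval z * (starRingEnd ℂ) ((φ j).eval w))) (n + 1)]
    refine Finset.sum_congr rfl fun i _ => ?_
    rw [hbcast i, eval_mul, eval_mul, eval_X, eval_X, map_mul]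
    ring
  rw [hsplit, hblast] at hker2
  have hs2 : ∑ j ∈ range (n + 2), (φ j).eval z * (starRingEnd ℂ) ((φ j).eval w)
      = ∑ j ∈ range (n + 1), (φ j).eval z * (starRingEnd ℂ) ((φ j).eval w)
        + (φ (n + 1)).eval z * (starRingEnd ℂ) ((φ (n + 1)).eval w) :=
    Finset.sum_range_succ _ _
  rw [hs2] at hker2
  linear_combination -hker2
end Phi

lemma sum_comm_mul (m : ℕ) (F G : ℕ → ℂ) :
    ∑ j ∈ Finset.range m, F j * G j = ∑ j ∈ Finset.range m, G j * F j :=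
  Finset.sum_congr rfl fun j _ => mul_comm _ _

lemma eval_map_conj' (p : Polynomial ℂ) (v : ℂ) :
    (p.map (starRingEnd ℂ)).eval v = (starRingEnd ℂ) (p.eval ((starRingEnd ℂ) v)) := by
  conv_lhs => rw [← Complex.conj_conj v]
  exact eval_map_conj p _

lemma eval_sum_C_mul (m : ℕ) (c : ℕ → ℂ) (f : ℕ → Polynomial ℂ) (r : ℂ) :
    (∑ j ∈ range m, C (c j) * f j).eval r = ∑ j ∈ range m, (f j).eval r * c j := by
  rw [eval_finset_sum]
  exact Finset.sum_congr rfl fun j _ => by rw [eval_mul, eval_C]; ring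

lemma derivative_sum_C_mul (m : ℕ) (c : ℕ → ℂ) (f : ℕ → Polynomial ℂ) :
    Polynomial.derivative (∑ j ∈ range m, C (c j) * f j)
      = ∑ j ∈ range m, C (c j) * Polynomial.derivative (f j) := by
  rw [derivative_sum]
  exact Finset.sum_congr rfl fun j _ => by rw [derivative_C_mul]

lemma deriv_transfer (m : ℕ) (f g : ℕ → Polynomial ℂ) (A B a b : Polynomial ℂ)
    (h : ∀ z v : ℂ, (1 - z * v) * ∑ j ∈ range m, (f j).eval z * (g j).eval v
      = A.eval z * a.eval v - B.eval z * b.eval v) :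
    ∀ z v : ℂ, (1 - z * v) * (∑ j ∈ range m, (f j).derivative.eval z * (g j).eval v)
        - v * ∑ j ∈ range m, (f j).eval z * (g j).eval v
      = A.derivative.eval z * a.eval v - B.derivative.eval z * b.eval v := by
  intro z v
  have hP : ((1 - C v * X) * ∑ j ∈ range m, C ((g j).eval v) * f j)
      = C (a.eval v) * A - C (b.eval v) * B := by
    apply Polynomial.funext
    intro r
    simp only [eval_mul, eval_sub, eval_one, eval_C, eval_X, eval_sum_C_mul]
    linear_combination h r v
  have hd := congrArg Polynomial.derivative hP
  rw [derivative_mul, derivative_sub, derivative_one, derivative_mul, derivative_C,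
    derivative_X, derivative_sub, derivative_C_mul, derivative_C_mul,
    derivative_sum_C_mul] at hd
  have he := congrArg (Polynomial.eval z) hd
  simp only [eval_add, eval_mul, eval_sub, eval_neg, eval_one, eval_C, eval_X, eval_zero,
    zero_mul, mul_one, zero_add, zero_sub, eval_sum_C_mul] at he
  linear_combination he

lemma deriv_transfer2 (m : ℕ) (f g : ℕ → Polynomial ℂ) (A B a b : Polynomial ℂ)
    (h : ∀ z v : ℂ, (1 - z * v) * (∑ j ∈ range m, (g j).eval v * (f j).derivative.eval z)
        - v * ∑ j ∈ range m, (g j).eval v * (f j).eval z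
      = A.derivative.eval z * a.eval v - B.derivative.eval z * b.eval v) :
    ∀ z v : ℂ, (1 - z * v) * (∑ j ∈ range m, (g j).derivative.eval v * (f j).derivative.eval z)
        - z * (∑ j ∈ range m, (g j).eval v * (f j).derivative.eval z)
        - v * (∑ j ∈ range m, (g j).derivative.eval v * (f j).eval z)
        - ∑ j ∈ range m, (g j).eval v * (f j).eval z
      = A.derivative.eval z * a.derivative.eval v - B.derivative.eval z * b.derivative.eval v := by
  intro z v
  have hP : ((1 - C z * X) * ∑ j ∈ range m, C ((f j).derivative.eval z) * g j
        - X * ∑ j ∈ range m, C ((f j).eval z) * g j)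
      = C (A.derivative.eval z) * a - C (B.derivative.eval z) * b := by
    apply Polynomial.funext
    intro r
    simp only [eval_mul, eval_sub, eval_one, eval_C, eval_X, eval_sum_C_mul]
    linear_combination h z r
  have hd := congrArg Polynomial.derivative hP
  rw [derivative_sub, derivative_mul, derivative_mul, derivative_sub, derivative_one,
    derivative_mul, derivative_C, derivative_X, derivative_sub, derivative_C_mul,
    derivative_C_mul, derivative_sum_C_mul, derivative_sum_C_mul] at hd
  have he := congrArg (Polynomial.eval v) hd
  simp only [eval_add, eval_mul, eval_sub, eval_neg, eval_one, eval_C, eval_X, eval_zero,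
    zero_mul, mul_one, zero_add, zero_sub, eval_sum_C_mul, one_mul] at he
  linear_combination he

/-- twice-differentiated Christoffel–Darboux formula for
`Σ_{j=0}^n φ_j′(z)·conj(φ_j′(w))`. -/
theorem christoffel_darboux_derivative_11
    (μ : Measure ℝ) [IsProbabilityMeasure μ]
    (φ : ℕ → Polynomial ℂ)
    (hdeg : ∀ k, (φ k).degree = k)
    (hlead : ∀ k, ∃ κ : ℝ, 0 < κ ∧ (φ k).leadingCoeff = (κ : ℂ))
    (horth : ∀ n m, ∫ θ, (φ n).eval (Complex.exp (θ * Complex.I)) *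
        (starRingEnd ℂ) ((φ m).eval (Complex.exp (θ * Complex.I))) ∂μ
        = if n = m then 1 else 0)
    (n : ℕ) (z w : ℂ) (hzw : z * (starRingEnd ℂ) w ≠ 1)
    (K R : ℂ) (S : ℂ → ℂ → ℂ)
    (hK : K = ∑ j ∈ Finset.range (n + 1),
        (φ j).eval z * (starRingEnd ℂ) ((φ j).eval w))
    (hS : ∀ x y : ℂ, S x y = (starRingEnd ℂ) ((starPoly (φ (n+1))).derivative.eval y) *
          (starPoly (φ (n+1))).eval x
        - (starRingEnd ℂ) ((φ (n+1)).derivative.eval y) * (φ (n+1)).eval x)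
    (hR : R = (starRingEnd ℂ) ((starPoly (φ (n+1))).derivative.eval w) *
          (starPoly (φ (n+1))).derivative.eval z
        - (starRingEnd ℂ) ((φ (n+1)).derivative.eval w) * (φ (n+1)).derivative.eval z) :
    ∑ j ∈ Finset.range (n + 1),
        (φ j).derivative.eval z * (starRingEnd ℂ) ((φ j).derivative.eval w)
      = (R * (1 - z * (starRingEnd ℂ) w) + z * (starRingEnd ℂ) (S w z)
          + (starRingEnd ℂ) w * S z w + (1 + z * (starRingEnd ℂ) w) * K)
        / (1 - z * (starRingEnd ℂ) w) ^ 2 := by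

  have horth' : ∀ a b, inn μ (φ a) (φ b) = if a = b then 1 else 0 := horth
  set Φ := φ (n + 1) with hΦ
  set Φs := starPoly (φ (n + 1)) with hΦs
  have h0 : ∀ z v : ℂ, (1 - z * v) * ∑ j ∈ range (n + 1),
        (φ j).eval z * ((φ j).map (starRingEnd ℂ)).eval v
      = Φs.eval z * (Φs.map (starRingEnd ℂ)).eval v
        - Φ.eval z * (Φ.map (starRingEnd ℂ)).eval v := by
    intro z v
    have h := cd μ φ hdeg hlead horth' n z ((starRingEnd ℂ) v)
    simp only [eval_map_conj'] at *
    simpa using h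
  have h1 := deriv_transfer (n + 1) φ (fun j => (φ j).map (starRingEnd ℂ))
    Φs Φ (Φs.map (starRingEnd ℂ)) (Φ.map (starRingEnd ℂ)) h0
  have h0' : ∀ z v : ℂ, (1 - z * v) * ∑ j ∈ range (n + 1),
        ((φ j).map (starRingEnd ℂ)).eval z * (φ j).eval v
      = (Φs.map (starRingEnd ℂ)).eval z * Φs.eval v
        - (Φ.map (starRingEnd ℂ)).eval z * Φ.eval v := by
    intro z v
    have h := h0 v z
    rw [sum_comm_mul (n + 1) (fun j => ((φ j).map (starRingEnd ℂ)).eval z)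
      (fun j => (φ j).eval v)]
    linear_combination h
  have h2 := deriv_transfer (n + 1) (fun j => (φ j).map (starRingEnd ℂ)) φ
    (Φs.map (starRingEnd ℂ)) (Φ.map (starRingEnd ℂ)) Φs Φ h0'
  have h1' : ∀ z v : ℂ, (1 - z * v) * (∑ j ∈ range (n + 1),
        ((φ j).map (starRingEnd ℂ)).eval v * (φ j).derivative.eval z)
        - v * ∑ j ∈ range (n + 1), ((φ j).map (starRingEnd ℂ)).eval v * (φ j).eval z
      = Φs.derivative.eval z * (Φs.map (starRingEnd ℂ)).eval v
        - Φ.derivative.eval z * (Φ.map (starRingEnd ℂ)).eval v := by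
    intro z v
    have h := h1 z v
    rw [sum_comm_mul (n + 1) (fun j => ((φ j).map (starRingEnd ℂ)).eval v)
      (fun j => (φ j).derivative.eval z),
      sum_comm_mul (n + 1) (fun j => ((φ j).map (starRingEnd ℂ)).eval v)
      (fun j => (φ j).eval z)]
    linear_combination h
  have h3 := deriv_transfer2 (n + 1) φ (fun j => (φ j).map (starRingEnd ℂ))
    Φs Φ (Φs.map (starRingEnd ℂ)) (Φ.map (starRingEnd ℂ)) h1'
  -- instantiate
  have E1 := h1 z ((starRingEnd ℂ) w)
  have E2 := h2 ((starRingEnd ℂ) w) z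
  have E3 := h3 z ((starRingEnd ℂ) w)
  simp only [Polynomial.derivative_map, eval_map_conj] at E1 E2 E3
  rw [sum_comm_mul (n + 1) (fun j => (starRingEnd ℂ) ((φ j).derivative.eval w))
      (fun j => (φ j).eval z),
    sum_comm_mul (n + 1) (fun j => (starRingEnd ℂ) ((φ j).eval w))
      (fun j => (φ j).eval z)] at E2
  rw [sum_comm_mul (n + 1) (fun j => (starRingEnd ℂ) ((φ j).derivative.eval w))
      (fun j => (φ j).derivative.eval z),
    sum_comm_mul (n + 1) (fun j => (starRingEnd ℂ) ((φ j).eval w))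
      (fun j => (φ j).derivative.eval z),
    sum_comm_mul (n + 1) (fun j => (starRingEnd ℂ) ((φ j).derivative.eval w))
      (fun j => (φ j).eval z),
    sum_comm_mul (n + 1) (fun j => (starRingEnd ℂ) ((φ j).eval w))
      (fun j => (φ j).eval z)] at E3
  have hu : (1 : ℂ) - z * (starRingEnd ℂ) w ≠ 0 := sub_ne_zero.mpr (Ne.symm hzw)
  rw [eq_div_iff (pow_ne_zero 2 hu), hK, hR, hS z w, hS w z]
  simp only [map_sub, map_mul, Complex.conj_conj]
  linear_combination (1 - z * (starRingEnd ℂ) w) * E3 + z * E1 + (starRingEnd ℂ) w * E2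
end
end

section
/- Let 1 < s < t and A(s,t) = { z ∈ ℂ : s < |z| < t }. Then (1/π²)·∫_{A(s,t)} ∫_{A(s,t)} 1/|1 − z·conj(w)|⁴ dA(z) dA(w) = −(t² − s²)²·(1 + (st)²) / ( (1 − t⁴)(1 − s⁴)(1 − (st)²) ), where dA denotes Lebesgue area measure on ℂ. (The right-hand side is positive since 1 − t⁴, 1 − s⁴, and 1 − (st)² are all negative.) -/
open MeasureTheory Real Set

lemma angular_integral (a b c : ℝ) (hb : 0 < b) (hba : b < a) (hc : 0 < c)
    (hc2 : c ^ 2 = a ^ 2 - b ^ 2) :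
    ∫ θ in (0:ℝ)..(2 * π), 1 / (a - b * Real.cos θ) ^ 2 = 2 * π * a / c ^ 3 := by
  have hD : ∀ x : ℝ, 0 < a - b * Real.cos x := by
    intro x; nlinarith [Real.cos_le_one x, Real.neg_one_le_cos x]
  have hE : ∀ x : ℝ, 0 < a - b * Real.cos x + c := fun x => by linarith [hD x]
  set G : ℝ → ℝ := fun x =>
    (b * Real.sin x / (a - b * Real.cos x)
      + a * (x + 2 * Real.arctan (b * Real.sin x / (a - b * Real.cos x + c))) / c) / c ^ 2
    with hG
  have key : ∀ x : ℝ, HasDerivAt G (1 / (a - b * Real.cos x) ^ 2) x := by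
    intro x
    have hDx := (hD x).ne'
    have hEx := (hE x).ne'
    have hs := Real.sin_sq_add_cos_sq x
    have h1 : HasDerivAt (fun x : ℝ => a - b * Real.cos x) (b * Real.sin x) x := by
      simpa using ((Real.hasDerivAt_cos x).const_mul b).const_sub a
    have h2 : HasDerivAt (fun x : ℝ => b * Real.sin x) (b * Real.cos x) x :=
      (Real.hasDerivAt_sin x).const_mul b
    have h3 : HasDerivAt (fun x : ℝ => b * Real.sin x / (a - b * Real.cos x))
        ((b * Real.cos x * (a - b * Real.cos x) - b * Real.sin x * (b * Real.sin x))
          / (a - b * Real.cos x) ^ 2) x := h2.div h1 hDx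
    have h4 : HasDerivAt (fun x : ℝ => a - b * Real.cos x + c) (b * Real.sin x) x :=
      h1.add_const c
    have h5 : HasDerivAt (fun x : ℝ => b * Real.sin x / (a - b * Real.cos x + c))
        ((b * Real.cos x * (a - b * Real.cos x + c) - b * Real.sin x * (b * Real.sin x))
          / (a - b * Real.cos x + c) ^ 2) x := h2.div h4 hEx
    have h6 := h5.arctan
    have A1 : 1/(1+(b*Real.sin x/(a-b*Real.cos x+c))^2) *
        ((b*Real.cos x*(a-b*Real.cos x+c) - b*Real.sin x*(b*Real.sin x))/(a-b*Real.cos x+c)^2)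
        = (c/(a-b*Real.cos x) - 1)/2 := by
      field_simp
      linear_combination (-(b^2*(a - b*Real.cos x + c))) * hs - (c + (a - b*Real.cos x)) * hc2
    rw [A1] at h6
    have h7 := ((hasDerivAt_id x).add (h6.const_mul (2:ℝ))).const_mul a
    have h8 := (h3.add (h7.div_const c)).div_const (c ^ 2)
    refine h8.congr_deriv ?_
    have hcx := hc.ne'
    field_simp
    linear_combination (-c) * (b^2 * hs + hc2)
  rw [intervalIntegral.integral_eq_sub_of_hasDerivAt (fun x _ => key x) ?_]
  · simp only [hG, Real.sin_two_pi, Real.cos_two_pi, Real.sin_zero, Real.cos_zero, mul_zero,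
      zero_div, Real.arctan_zero, add_zero, zero_add]
    field_simp
    ring
  · apply Continuous.intervalIntegrable
    exact continuous_const.div (by continuity) (fun x => pow_ne_zero _ (hD x).ne')

lemma norm_sq_polar (r θ : ℝ) (c : ℂ) (hc : c ≠ 0) :
    Complex.normSq (1 - (Complex.polarCoord.symm (r, θ)) * c)
      = (1 + r ^ 2 * ‖c‖ ^ 2) - 2 * r * ‖c‖ * Real.cos (θ + Complex.arg c) := by
  have habs : ‖c‖ ≠ 0 := by simpa using hc
  have h1 : ‖c‖ * Real.cos (Complex.arg c) = c.re := by
    rw [Complex.cos_arg hc]; field_simp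
  have h2 : ‖c‖ * Real.sin (Complex.arg c) = c.im := by
    rw [Complex.sin_arg]; field_simp
  have hnc : ‖c‖ ^ 2 = c.re ^ 2 + c.im ^ 2 := by
    rw [Complex.sq_norm]
    simp [Complex.normSq_apply]; ring
  have hs := Real.sin_sq_add_cos_sq θ
  rw [Complex.polarCoord_symm_apply, Real.cos_add]
  simp only [Complex.normSq_apply, Complex.sub_re, Complex.sub_im, Complex.mul_re, Complex.mul_im,
    Complex.one_re, Complex.one_im, Complex.add_re, Complex.add_im, Complex.ofReal_re,
    Complex.ofReal_im, Complex.mul_I_re, Complex.mul_I_im, Complex.I_re, Complex.I_im]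
  ring_nf
  linear_combination (r^2*(c.re^2+c.im^2))*hs - r^2*hnc + (2*r*Real.cos θ)*h1
    - (2*r*Real.sin θ)*h2

lemma norm_pow4 (r θ : ℝ) (c : ℂ) (hc : c ≠ 0) :
    ‖1 - (Complex.polarCoord.symm (r, θ)) * c‖ ^ 4
      = ((1 + r ^ 2 * ‖c‖ ^ 2) - 2 * r * ‖c‖ * Real.cos (θ + Complex.arg c)) ^ 2 := by
  rw [← norm_sq_polar r θ c hc, ← Complex.sq_norm]
  ring

lemma polar_annulus (s t : ℝ) (h0 : 0 < s) (f : ℂ → ℝ) :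
    ∫ z in {z : ℂ | s < ‖z‖ ∧ ‖z‖ < t}, f z
      = ∫ p in Set.Ioo s t ×ˢ Set.Ioo (-π) π, p.1 • f (Complex.polarCoord.symm p) := by
  have hA : MeasurableSet {z : ℂ | s < ‖z‖ ∧ ‖z‖ < t} := by
    have : {z : ℂ | s < ‖z‖ ∧ ‖z‖ < t} = (fun z : ℂ => ‖z‖) ⁻¹' (Set.Ioo s t) := by
      ext z; simp [Set.mem_Ioo]
    rw [this]
    exact (isOpen_Ioo.preimage continuous_norm).measurableSet
  rw [← integral_indicator hA,
    ← Complex.integral_comp_polarCoord_symm ({z : ℂ | s < ‖z‖ ∧ ‖z‖ < t}.indicator f)]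
  have hsub : Set.Ioo s t ×ˢ Set.Ioo (-π) π ⊆ polarCoord.target := by
    intro p hp
    exact ⟨lt_trans h0 hp.1.1, hp.2⟩
  have hmeas : MeasurableSet (Set.Ioo s t ×ˢ Set.Ioo (-π) π : Set (ℝ × ℝ)) :=
    measurableSet_Ioo.prod measurableSet_Ioo
  rw [← integral_indicator polarCoord.open_target.measurableSet,
    ← integral_indicator hmeas]
  congr 1
  ext p
  rcases p with ⟨r, θ⟩
  by_cases hp : (r, θ) ∈ polarCoord.target
  · have hr : 0 < r := hp.1
    have habs : ‖Complex.polarCoord.symm (r, θ)‖ = r := by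
      rw [Complex.norm_polarCoord_symm, abs_of_pos hr]
    rw [Set.indicator_of_mem hp]
    by_cases hrt : (r, θ) ∈ Set.Ioo s t ×ˢ Set.Ioo (-π) π
    · rw [Set.indicator_of_mem hrt, Set.indicator_of_mem]
      simp only [Set.mem_setOf_eq, habs]
      exact ⟨hrt.1.1, hrt.1.2⟩
    · rw [Set.indicator_of_notMem hrt, Set.indicator_of_notMem]
      · simp
      · simp only [Set.mem_setOf_eq, habs]
        intro hmem
        exact hrt ⟨⟨hmem.1, hmem.2⟩, hp.2⟩
  · rw [Set.indicator_of_notMem hp, Set.indicator_of_notMem]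
    intro hmem
    exact hp (hsub hmem)

lemma radial_inner (ρ s t : ℝ) (hs : 1 < s) (hst : s < t) (hρ : 1 < ρ) :
    ∫ r in s..t, r * (2 * π * (1 + r ^ 2 * ρ ^ 2) / (r ^ 2 * ρ ^ 2 - 1) ^ 3)
      = π * (s ^ 2 / (s ^ 2 * ρ ^ 2 - 1) ^ 2 - t ^ 2 / (t ^ 2 * ρ ^ 2 - 1) ^ 2) := by
  have huIcc : Set.uIcc s t = Set.Icc s t := Set.uIcc_of_le hst.le
  have hden : ∀ r ∈ Set.uIcc s t, 0 < r ^ 2 * ρ ^ 2 - 1 := by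
    intro r hr
    rw [huIcc] at hr
    have h1 : 1 < r := lt_of_lt_of_le hs hr.1
    have h2 : 1 < r * ρ := by nlinarith
    nlinarith [h2, sq_nonneg (r * ρ - 1)]
  have key : ∀ r ∈ Set.uIcc s t, HasDerivAt (fun r => -π * (r ^ 2 / (r ^ 2 * ρ ^ 2 - 1) ^ 2))
      (r * (2 * π * (1 + r ^ 2 * ρ ^ 2) / (r ^ 2 * ρ ^ 2 - 1) ^ 3)) r := by
    intro r hr
    have hd := hden r hr
    have h1 : HasDerivAt (fun r : ℝ => r ^ 2) (2 * r) r := by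
      simpa using hasDerivAt_pow 2 r
    have h2 : HasDerivAt (fun r : ℝ => r ^ 2 * ρ ^ 2 - 1) (2 * r * ρ ^ 2) r :=
      (h1.mul_const (ρ ^ 2)).sub_const 1
    have h3 : HasDerivAt (fun r : ℝ => (r ^ 2 * ρ ^ 2 - 1) ^ 2)
        (2 * (r ^ 2 * ρ ^ 2 - 1) ^ 1 * (2 * r * ρ ^ 2)) r := h2.pow 2
    have h4 := (h1.div h3 (by positivity)).const_mul (-π)
    refine h4.congr_deriv ?_
    have h5 : (r ^ 2 * ρ ^ 2 - 1) ≠ 0 := hd.ne'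
    field_simp
    ring
  rw [intervalIntegral.integral_eq_sub_of_hasDerivAt key ?_]
  · have h5 : (s ^ 2 * ρ ^ 2 - 1) ≠ 0 := (hden s (by rw [huIcc]; exact ⟨le_refl s, hst.le⟩)).ne'
    have h6 : (t ^ 2 * ρ ^ 2 - 1) ≠ 0 := (hden t (by rw [huIcc]; exact ⟨hst.le, le_refl t⟩)).ne'
    field_simp
    ring
  · apply ContinuousOn.intervalIntegrable
    apply ContinuousOn.mul continuousOn_id
    apply ContinuousOn.div (by fun_prop) (by fun_prop)
    intro r hr
    exact pow_ne_zero _ (hden r hr).ne'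

lemma radial_outer (s t : ℝ) (hs : 1 < s) (hst : s < t) :
    ∫ ρ in s..t, ρ * (π * (s ^ 2 / (s ^ 2 * ρ ^ 2 - 1) ^ 2 - t ^ 2 / (t ^ 2 * ρ ^ 2 - 1) ^ 2))
      = π * (1 / (2 * (s ^ 4 - 1)) + 1 / (2 * (t ^ 4 - 1)) - 1 / (s ^ 2 * t ^ 2 - 1)) := by
  have huIcc : Set.uIcc s t = Set.Icc s t := Set.uIcc_of_le hst.le
  have hdens : ∀ u ∈ Set.uIcc s t, ∀ v : ℝ, 1 < v → 0 < v ^ 2 * u ^ 2 - 1 := by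
    intro u hu v hv
    rw [huIcc] at hu
    have h1 : 1 < u := lt_of_lt_of_le hs hu.1
    have h2 : 1 < v * u := by nlinarith
    nlinarith [h2, sq_nonneg (v * u - 1)]
  have key : ∀ ρ ∈ Set.uIcc s t, HasDerivAt
      (fun ρ => π * (-1 / (2 * (s ^ 2 * ρ ^ 2 - 1)) + 1 / (2 * (t ^ 2 * ρ ^ 2 - 1))))
      (ρ * (π * (s ^ 2 / (s ^ 2 * ρ ^ 2 - 1) ^ 2 - t ^ 2 / (t ^ 2 * ρ ^ 2 - 1) ^ 2))) ρ := by
    intro ρ hρ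
    have hd1 := hdens ρ hρ s hs
    have hd2 := hdens ρ hρ t (hs.trans hst)
    have h1 : HasDerivAt (fun ρ : ℝ => ρ ^ 2) (2 * ρ) ρ := by
      simpa using hasDerivAt_pow 2 ρ
    have h2 : HasDerivAt (fun ρ : ℝ => 2 * (s ^ 2 * ρ ^ 2 - 1)) (2 * (s ^ 2 * (2 * ρ))) ρ := by
      exact (((h1.const_mul (s ^ 2)).sub_const 1).const_mul 2)
    have h3 : HasDerivAt (fun ρ : ℝ => 2 * (t ^ 2 * ρ ^ 2 - 1)) (2 * (t ^ 2 * (2 * ρ))) ρ := by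
      exact (((h1.const_mul (t ^ 2)).sub_const 1).const_mul 2)
    have h4 := ((hasDerivAt_const ρ (-1:ℝ)).div h2 (by positivity)).add
      ((hasDerivAt_const ρ (1:ℝ)).div h3 (by positivity))
    have h5 := h4.const_mul π
    refine h5.congr_deriv ?_
    have h6 : (s ^ 2 * ρ ^ 2 - 1) ≠ 0 := hd1.ne'
    have h7 : (t ^ 2 * ρ ^ 2 - 1) ≠ 0 := hd2.ne'
    field_simp
    ring
  rw [intervalIntegral.integral_eq_sub_of_hasDerivAt key ?_]
  · have h5 : (s ^ 2 * s ^ 2 - 1) ≠ 0 := (hdens s (by rw [huIcc]; exact ⟨le_refl s, hst.le⟩) s hs).ne'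
    have h6 : (t ^ 2 * t ^ 2 - 1) ≠ 0 := (hdens t (by rw [huIcc]; exact ⟨hst.le, le_refl t⟩) t (hs.trans hst)).ne'
    have h7 : (s ^ 2 * t ^ 2 - 1) ≠ 0 := (hdens t (by rw [huIcc]; exact ⟨hst.le, le_refl t⟩) s hs).ne'
    have h8 : (t ^ 2 * s ^ 2 - 1) ≠ 0 := (hdens s (by rw [huIcc]; exact ⟨le_refl s, hst.le⟩) t (hs.trans hst)).ne'
    have h9 : (s ^ 4 - 1) ≠ 0 := by intro h; apply h5; nlinarith
    have h10 : (t ^ 4 - 1) ≠ 0 := by intro h; apply h6; nlinarith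
    field_simp
    ring
  · apply ContinuousOn.intervalIntegrable
    apply ContinuousOn.mul continuousOn_id
    apply ContinuousOn.const_smul ?_ π
    apply ContinuousOn.sub
    · apply ContinuousOn.div continuousOn_const (by fun_prop)
      intro ρ hρ; exact pow_ne_zero _ (hdens ρ hρ s hs).ne'
    · apply ContinuousOn.div continuousOn_const (by fun_prop)
      intro ρ hρ; exact pow_ne_zero _ (hdens ρ hρ t (hs.trans hst)).ne'

lemma angular_Ioo (a b c φ : ℝ) (hb : 0 < b) (hba : b < a) (hc : 0 < c)
    (hc2 : c ^ 2 = a ^ 2 - b ^ 2) :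
    ∫ θ in Set.Ioo (-π) π, 1 / (a - b * Real.cos (θ + φ)) ^ 2 = 2 * π * a / c ^ 3 := by
  rw [← integral_Ioc_eq_integral_Ioo,
    ← intervalIntegral.integral_of_le (by linarith [Real.pi_pos] : -π ≤ π)]
  have hcomp : ∫ θ in (-π)..π, 1 / (a - b * Real.cos (θ + φ)) ^ 2
      = ∫ u in (-π + φ)..(π + φ), 1 / (a - b * Real.cos u) ^ 2 := by
    exact intervalIntegral.integral_comp_add_right (fun u => 1 / (a - b * Real.cos u) ^ 2) φ
  rw [hcomp]
  have hper : Function.Periodic (fun u => 1 / (a - b * Real.cos u) ^ 2) (2 * π) := by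
    intro x; simp [Real.cos_add_two_pi]
  have := hper.intervalIntegral_add_eq (-π + φ) 0
  rw [show -π + φ + 2 * π = π + φ by ring, zero_add] at this
  rw [this]
  exact angular_integral a b c hb hba hc hc2

lemma inner_integral (s t : ℝ) (hs : 1 < s) (hst : s < t) (w : ℂ) (hw : 1 < ‖w‖) :
    ∫ z in {z : ℂ | s < ‖z‖ ∧ ‖z‖ < t}, 1 / ‖1 - z * (starRingEnd ℂ) w‖ ^ 4
      = π * (s ^ 2 / (s ^ 2 * ‖w‖ ^ 2 - 1) ^ 2 - t ^ 2 / (t ^ 2 * ‖w‖ ^ 2 - 1) ^ 2) := by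
  set c : ℂ := (starRingEnd ℂ) w with hcdef
  have hcw : ‖c‖ = ‖w‖ := RCLike.norm_conj w
  have hw0 : w ≠ 0 := by
    intro h; rw [h] at hw; simp at hw; linarith
  have hc0 : c ≠ 0 := by
    simp only [hcdef, ne_eq, map_eq_zero]; exact hw0
  have h0s : (0:ℝ) < s := by linarith
  rw [polar_annulus s t h0s _]
  -- Fubini on the rectangle
  have hcont : ContinuousOn (fun p : ℝ × ℝ => p.1 • (1 / ‖1 - Complex.polarCoord.symm p * c‖ ^ 4))
      (Set.Icc s t ×ˢ Set.Icc (-π) π) := by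
    have hsymm : Continuous (fun p : ℝ × ℝ => Complex.polarCoord.symm p) := by
      have : (fun p : ℝ × ℝ => Complex.polarCoord.symm p)
          = fun p : ℝ × ℝ => (p.1 : ℂ) * (Real.cos p.2 + Real.sin p.2 * Complex.I) := by
        ext p : 1
        exact Complex.polarCoord_symm_apply p
      rw [this]; fun_prop
    apply ContinuousOn.smul (continuous_fst.continuousOn)
    apply ContinuousOn.div continuousOn_const
    · fun_prop
    · intro p hp
      apply pow_ne_zero
      rw [norm_ne_zero_iff, sub_ne_zero]
      intro h
      have h1 : ‖Complex.polarCoord.symm p‖ = |p.1| := by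
        rw [Complex.norm_polarCoord_symm]
      have h2 : ‖(1:ℂ)‖ = ‖Complex.polarCoord.symm p * c‖ := by rw [h]
      rw [norm_one, norm_mul, h1, hcw, abs_of_pos (by linarith [hp.1.1] : (0:ℝ) < p.1)] at h2
      have : 1 < p.1 * ‖w‖ := by nlinarith [hp.1.1]
      linarith [h2, this]
  have hint : IntegrableOn (fun p : ℝ × ℝ => p.1 • (1 / ‖1 - Complex.polarCoord.symm p * c‖ ^ 4))
      (Set.Ioo s t ×ˢ Set.Ioo (-π) π) := by
    apply (hcont.integrableOn_compact (isCompact_Icc.prod isCompact_Icc)).mono_set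
    exact Set.prod_mono Set.Ioo_subset_Icc_self Set.Ioo_subset_Icc_self
  rw [Measure.volume_eq_prod] at hint ⊢
  rw [setIntegral_prod _ hint]
  -- inner θ integral for each r
  have hθ : ∀ r ∈ Set.Ioo s t,
      ∫ θ in Set.Ioo (-π) π, r • (1 / ‖1 - Complex.polarCoord.symm (r, θ) * c‖ ^ 4)
        = r * (2 * π * (1 + r ^ 2 * ‖w‖ ^ 2) / (r ^ 2 * ‖w‖ ^ 2 - 1) ^ 3) := by
    intro r hr
    have hr1 : 1 < r := lt_trans hs hr.1
    have hR : 1 < r * ‖w‖ := by nlinarith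
    rw [integral_smul]
    have hrw : ∀ θ : ℝ, 1 / ‖1 - Complex.polarCoord.symm (r, θ) * c‖ ^ 4
        = 1 / ((1 + r ^ 2 * ‖w‖ ^ 2) - 2 * r * ‖w‖ * Real.cos (θ + Complex.arg c)) ^ 2 := by
      intro θ; rw [norm_pow4 r θ c hc0, hcw]
    simp_rw [hrw]
    rw [angular_Ioo (1 + r ^ 2 * ‖w‖ ^ 2) (2 * r * ‖w‖) (r ^ 2 * ‖w‖ ^ 2 - 1) (Complex.arg c)
      (by positivity) (by nlinarith [sq_nonneg (r * ‖w‖ - 1)])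
      (by nlinarith [sq_nonneg (r * ‖w‖ - 1)]) (by ring)]
    rw [smul_eq_mul]
  calc ∫ r in Set.Ioo s t, ∫ θ in Set.Ioo (-π) π,
        r • (1 / ‖1 - Complex.polarCoord.symm (r, θ) * c‖ ^ 4)
      = ∫ r in Set.Ioo s t, r * (2 * π * (1 + r ^ 2 * ‖w‖ ^ 2) / (r ^ 2 * ‖w‖ ^ 2 - 1) ^ 3) := by
        exact setIntegral_congr_fun measurableSet_Ioo hθ
    _ = ∫ r in s..t, r * (2 * π * (1 + r ^ 2 * ‖w‖ ^ 2) / (r ^ 2 * ‖w‖ ^ 2 - 1) ^ 3) := by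
        rw [intervalIntegral.integral_of_le hst.le, integral_Ioc_eq_integral_Ioo]
    _ = π * (s ^ 2 / (s ^ 2 * ‖w‖ ^ 2 - 1) ^ 2 - t ^ 2 / (t ^ 2 * ‖w‖ ^ 2 - 1) ^ 2) :=
        radial_inner ‖w‖ s t hs hst hw

/-- for an annulus `A(s,t)` contained in the exterior of the closed unit disk,
`(1/π²)·∫∫_{A(s,t)×A(s,t)} 1/|1−z·conj(w)|⁴ dA(z) dA(w)
  = −(t²−s²)²·(1+(st)²)/((1−t⁴)(1−s⁴)(1−(st)²))`. -/
theorem double_integral_kernel_annulus_exterior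
    (s t : ℝ) (hs : 1 < s) (hst : s < t) :
    (1 / Real.pi ^ 2) *
        ∫ w in {z : ℂ | s < ‖z‖ ∧ ‖z‖ < t},
          ∫ z in {z : ℂ | s < ‖z‖ ∧ ‖z‖ < t}, 1 / ‖1 - z * (starRingEnd ℂ) w‖ ^ 4
      = -((t ^ 2 - s ^ 2) ^ 2 * (1 + (s * t) ^ 2)) /
          ((1 - t ^ 4) * (1 - s ^ 4) * (1 - (s * t) ^ 2)) := by
  have h0s : (0:ℝ) < s := by linarith
  have hA : MeasurableSet {z : ℂ | s < ‖z‖ ∧ ‖z‖ < t} := by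
    have : {z : ℂ | s < ‖z‖ ∧ ‖z‖ < t} = (fun z : ℂ => ‖z‖) ⁻¹' (Set.Ioo s t) := by
      ext z; simp [Set.mem_Ioo]
    rw [this]
    exact (isOpen_Ioo.preimage continuous_norm).measurableSet
  have step1 : ∫ w in {z : ℂ | s < ‖z‖ ∧ ‖z‖ < t},
        ∫ z in {z : ℂ | s < ‖z‖ ∧ ‖z‖ < t}, 1 / ‖1 - z * (starRingEnd ℂ) w‖ ^ 4
      = ∫ w in {z : ℂ | s < ‖z‖ ∧ ‖z‖ < t},
          π * (s ^ 2 / (s ^ 2 * ‖w‖ ^ 2 - 1) ^ 2 - t ^ 2 / (t ^ 2 * ‖w‖ ^ 2 - 1) ^ 2) := by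
    apply setIntegral_congr_fun hA
    intro w hw
    exact inner_integral s t hs hst w (by linarith [hw.1])
  rw [step1, polar_annulus s t h0s _]
  have step2 : ∫ p in Set.Ioo s t ×ˢ Set.Ioo (-π) π,
        p.1 • (π * (s ^ 2 / (s ^ 2 * ‖Complex.polarCoord.symm p‖ ^ 2 - 1) ^ 2
          - t ^ 2 / (t ^ 2 * ‖Complex.polarCoord.symm p‖ ^ 2 - 1) ^ 2))
      = ∫ p in Set.Ioo s t ×ˢ Set.Ioo (-π) π,
        p.1 • (π * (s ^ 2 / (s ^ 2 * p.1 ^ 2 - 1) ^ 2 - t ^ 2 / (t ^ 2 * p.1 ^ 2 - 1) ^ 2)) := by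
    apply setIntegral_congr_fun (measurableSet_Ioo.prod measurableSet_Ioo)
    intro p hp
    have h1 : ‖Complex.polarCoord.symm p‖ = p.1 := by
      rw [Complex.norm_polarCoord_symm,
        abs_of_pos (by linarith [hp.1.1] : (0:ℝ) < p.1)]
    simp only [h1]
  rw [step2]
  have hden : ∀ u ∈ Set.Icc s t, ∀ v : ℝ, 1 < v → v ^ 2 * u ^ 2 - 1 ≠ 0 := by
    intro u hu v hv
    have h1 : 1 < u := lt_of_lt_of_le hs hu.1
    have h2 : 1 < v * u := by nlinarith
    nlinarith [h2, sq_nonneg (v * u - 1)]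
  have hint : IntegrableOn (fun p : ℝ × ℝ =>
      p.1 • (π * (s ^ 2 / (s ^ 2 * p.1 ^ 2 - 1) ^ 2 - t ^ 2 / (t ^ 2 * p.1 ^ 2 - 1) ^ 2)))
      (Set.Ioo s t ×ˢ Set.Ioo (-π) π) := by
    have hcont : ContinuousOn (fun p : ℝ × ℝ =>
        p.1 • (π * (s ^ 2 / (s ^ 2 * p.1 ^ 2 - 1) ^ 2 - t ^ 2 / (t ^ 2 * p.1 ^ 2 - 1) ^ 2)))
        (Set.Icc s t ×ˢ Set.Icc (-π) π) := by
      apply ContinuousOn.smul (continuous_fst.continuousOn)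
      apply ContinuousOn.const_smul ?_ π
      apply ContinuousOn.sub
      · apply ContinuousOn.div continuousOn_const (by fun_prop)
        intro p hp; exact pow_ne_zero _ (hden p.1 hp.1 s hs)
      · apply ContinuousOn.div continuousOn_const (by fun_prop)
        intro p hp; exact pow_ne_zero _ (hden p.1 hp.1 t (hs.trans hst))
    apply (hcont.integrableOn_compact (isCompact_Icc.prod isCompact_Icc)).mono_set
    exact Set.prod_mono Set.Ioo_subset_Icc_self Set.Ioo_subset_Icc_self
  rw [Measure.volume_eq_prod] at hint ⊢
  rw [setIntegral_prod _ hint]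
  have step3 : ∫ r in Set.Ioo s t, ∫ θ in Set.Ioo (-π) π,
        r • (π * (s ^ 2 / (s ^ 2 * r ^ 2 - 1) ^ 2 - t ^ 2 / (t ^ 2 * r ^ 2 - 1) ^ 2))
      = ∫ r in Set.Ioo s t, (2 * π) *
          (r * (π * (s ^ 2 / (s ^ 2 * r ^ 2 - 1) ^ 2 - t ^ 2 / (t ^ 2 * r ^ 2 - 1) ^ 2))) := by
    apply setIntegral_congr_fun measurableSet_Ioo
    intro r _
    simp only [setIntegral_const, Real.volume_Ioo, smul_eq_mul]
    rw [Real.volume_real_Ioo_of_le (by linarith [Real.pi_pos])]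
    ring
  rw [step3, integral_const_mul]
  have hIoo : (∫ r in Set.Ioo s t,
      r * (π * (s ^ 2 / (s ^ 2 * r ^ 2 - 1) ^ 2 - t ^ 2 / (t ^ 2 * r ^ 2 - 1) ^ 2)))
    = ∫ r in s..t,
      r * (π * (s ^ 2 / (s ^ 2 * r ^ 2 - 1) ^ 2 - t ^ 2 / (t ^ 2 * r ^ 2 - 1) ^ 2)) := by
    rw [intervalIntegral.integral_of_le hst.le, integral_Ioc_eq_integral_Ioo]
  rw [hIoo, radial_outer s t hs hst]
  have h1 : (1:ℝ) < s * s := by nlinarith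
  have h2 : (1:ℝ) < t * t := by nlinarith
  have h3 : (1:ℝ) < s * t := by nlinarith
  have h4 : s ^ 4 - 1 ≠ 0 := by nlinarith [sq_nonneg (s * s - 1)]
  have h5 : t ^ 4 - 1 ≠ 0 := by nlinarith [sq_nonneg (t * t - 1)]
  have h6 : s ^ 2 * t ^ 2 - 1 ≠ 0 := by nlinarith [sq_nonneg (s * t - 1)]
  have h7 : (1:ℝ) - t ^ 4 ≠ 0 := by intro h; apply h5; linarith
  have h8 : (1:ℝ) - s ^ 4 ≠ 0 := by intro h; apply h4; linarith
  have h9 : (1:ℝ) - (s * t) ^ 2 ≠ 0 := by intro h; apply h6; nlinarith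
  have hπ : π ≠ 0 := Real.pi_ne_zero
  have h9' : (1:ℝ) - s ^ 2 * t ^ 2 ≠ 0 := by intro h; apply h6; nlinarith
  field_simp
  ring
end
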